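/- arXiv:1205.4491 — 5 statements merged into one kernel-verified Lean document; each statement's English description precedes it below -/
import Mathlib

section
/- Let k be an algebraic closure of F_3. The normalizer in PGL_2(k) of the subgroup PSL_2(F_3) (embedded via the inclusion F_3 ↪ k) is equal to PGL_2(F_3) (embedded via the same inclusion). -/
open Matrix

noncomputable section

/-- `PGL₂` of a field (or commutative ring): the quotient of `GL₂` by its center. -/
abbrev PGL2 (K : Type*) [CommRing K] : Type _ :=
  GL (Fin 2) K ⧸ Subgroup.center (GL (Fin 2) K)

/-- The natural projection `GL₂(K) → PGL₂(K)`. -/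
def toPGL2 (K : Type*) [CommRing K] : GL (Fin 2) K →* PGL2 K :=
  QuotientGroup.mk' _

/-- The image of `PGL₂(R)` in `PGL₂(k)` induced by a ring homomorphism `f : R →+* k`
(e.g. the inclusion of a finite field into an algebraic closure). -/
def PGLsub {R k : Type*} [CommRing R] [CommRing k] (f : R →+* k) : Subgroup (PGL2 k) :=
  ((toPGL2 k).comp (Matrix.GeneralLinearGroup.map f)).range

/-- The image of `PSL₂(R)` (i.e. the image of `SL₂(R)`) in `PGL₂(k)` induced by a ring
homomorphism `f : R →+* k`. -/
def PSLsub {R k : Type*} [CommRing R] [CommRing k] (f : R →+* k) : Subgroup (PGL2 k) :=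
  ((toPGL2 k).comp ((Matrix.GeneralLinearGroup.map f).comp
    Matrix.SpecialLinearGroup.toGL)).range

/-- Two subgroups of a group are conjugate. -/
def IsConjSubgroup {G : Type*} [Group G] (H K : Subgroup G) : Prop :=
  ∃ g : G, Subgroup.map (MulAut.conj g).toMonoidHom H = K


-- ## Auxiliary setup
abbrev Fq := ZMod 3
abbrev kk := AlgebraicClosure (ZMod 3)
abbrev ff : Fq →+* kk := algebraMap _ _
abbrev phim : GL (Fin 2) Fq →* GL (Fin 2) kk := Matrix.GeneralLinearGroup.map ff
abbrev pim : GL (Fin 2) kk →* PGL2 kk := toPGL2 kk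

lemma h3 : (3 : kk) = 0 := by
  have := CharP.cast_eq_zero kk 3
  exact_mod_cast this

lemma mem_center_iff' (z : GL (Fin 2) kk) :
    z ∈ Subgroup.center (GL (Fin 2) kk) ↔
      z.val 0 1 = 0 ∧ z.val 1 0 = 0 ∧ z.val 0 0 = z.val 1 1 := by
  constructor
  · intro hz
    rw [Subgroup.mem_center_iff] at hz
    have hinv1 : (!![1,1;0,1] : Matrix (Fin 2) (Fin 2) kk) * !![1,-1;0,1] = 1 := by
      ext i j; fin_cases i <;> fin_cases j <;> simp [Matrix.mul_apply, Fin.sum_univ_two]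
    have hinv1' : (!![1,-1;0,1] : Matrix (Fin 2) (Fin 2) kk) * !![1,1;0,1] = 1 := by
      ext i j; fin_cases i <;> fin_cases j <;> simp [Matrix.mul_apply, Fin.sum_univ_two]
    have hinv2 : (!![1,0;1,1] : Matrix (Fin 2) (Fin 2) kk) * !![1,0;-1,1] = 1 := by
      ext i j; fin_cases i <;> fin_cases j <;> simp [Matrix.mul_apply, Fin.sum_univ_two]
    have hinv2' : (!![1,0;-1,1] : Matrix (Fin 2) (Fin 2) kk) * !![1,0;1,1] = 1 := by
      ext i j; fin_cases i <;> fin_cases j <;> simp [Matrix.mul_apply, Fin.sum_univ_two]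
    set E : GL (Fin 2) kk := ⟨!![1,1;0,1], !![1,-1;0,1], hinv1, hinv1'⟩ with hE
    set E' : GL (Fin 2) kk := ⟨!![1,0;1,1], !![1,0;-1,1], hinv2, hinv2'⟩ with hE'
    have e1 := congrArg (fun u : GL (Fin 2) kk => u.val 0 0) (hz E)
    have e2 := congrArg (fun u : GL (Fin 2) kk => u.val 0 1) (hz E)
    have e3 := congrArg (fun u : GL (Fin 2) kk => u.val 0 0) (hz E')
    simp [hE, hE', Units.val_mul, Matrix.mul_apply, Fin.sum_univ_two] at e1 e2 e3
    exact ⟨e3, e1, by linear_combination -e2⟩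
  · rintro ⟨h1, h2, h4⟩
    rw [Subgroup.mem_center_iff]
    intro g
    ext i j
    have : ∀ i j, (g.val * z.val) i j = (z.val * g.val) i j := by
      intro i j
      fin_cases i <;> fin_cases j <;>
        simp [Matrix.mul_apply, Fin.sum_univ_two, h1, h2, ← h4] <;> ring
    exact this i j

lemma pgl_eq_of_smul (M N : GL (Fin 2) kk) (c : kk) (h : M.val = c • N.val) :
    pim M = pim N := by
  have hval : (N⁻¹ * M).val = c • (1 : Matrix (Fin 2) (Fin 2) kk) := by
    rw [Units.val_mul, h, Matrix.mul_smul, ← Units.val_mul, inv_mul_cancel, Units.val_one]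
  have hc : N⁻¹ * M ∈ Subgroup.center (GL (Fin 2) kk) := by
    rw [mem_center_iff', hval]
    simp [Matrix.one_apply]
  symm
  rw [show pim = QuotientGroup.mk' (Subgroup.center (GL (Fin 2) kk)) from rfl,
    QuotientGroup.mk'_eq_mk']
  exact ⟨N⁻¹ * M, hc, by group⟩

lemma phi_val (X : GL (Fin 2) Fq) (i j : Fin 2) : (phim X).val i j = ff (X.val i j) := rfl

lemma push_eq (X Y : GL (Fin 2) Fq) (h : X.val = Y.val ∨ X.val = -Y.val) :
    pim (phim X) = pim (phim Y) := by
  rcases h with h | h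
  · congr 1; congr 1; exact Units.ext h
  · refine pgl_eq_of_smul _ _ (-1) ?_
    ext i j
    rw [Matrix.smul_apply, phi_val, phi_val, h]
    simp

lemma center_of_pgl_eq (X Y : GL (Fin 2) kk) (h : pim X = pim Y) :
    Y⁻¹ * X ∈ Subgroup.center (GL (Fin 2) kk) := by
  have : pim (Y⁻¹ * X) = 1 := by
    rw [_root_.map_mul, _root_.map_inv, ← h]
    group
  rwa [show pim = QuotientGroup.mk' (Subgroup.center (GL (Fin 2) kk)) from rfl,
    QuotientGroup.mk'_apply, QuotientGroup.eq_one_iff] at this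

lemma over_F (X Y : GL (Fin 2) Fq) (h : pim (phim X) = pim (phim Y)) :
    (Y⁻¹ * X).val 0 1 = 0 ∧ (Y⁻¹ * X).val 1 0 = 0 ∧
      (Y⁻¹ * X).val 0 0 = (Y⁻¹ * X).val 1 1 := by
  have hc := center_of_pgl_eq (phim X) (phim Y) h
  rw [← _root_.map_inv, ← _root_.map_mul, mem_center_iff'] at hc
  obtain ⟨h1, h2, h4⟩ := hc
  rw [phi_val] at h1 h2
  rw [phi_val, phi_val] at h4
  exact ⟨ff.injective (by simpa using h1), ff.injective (by simpa using h2), ff.injective h4⟩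

def A3 : GL (Fin 2) Fq := ⟨!![0,1;2,0], !![0,2;1,0], by decide, by decide⟩
def B3 : GL (Fin 2) Fq := ⟨!![1,1;1,2], !![2,2;2,1], by decide, by decide⟩
def C3 : GL (Fin 2) Fq := ⟨!![1,2;2,2], !![2,1;1,1], by decide, by decide⟩


lemma conj_push (T X Y : GL (Fin 2) Fq)
    (h : (T * X * T⁻¹).val = Y.val ∨ (T * X * T⁻¹).val = -Y.val) :
    pim (phim T) * pim (phim X) * (pim (phim T))⁻¹ = pim (phim Y) := by
  have := push_eq (T * X * T⁻¹) Y h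
  rw [← this]
  simp [_root_.map_mul, _root_.map_inv]

lemma mem_PGL (X : GL (Fin 2) Fq) : pim (phim X) ∈ PGLsub ff := ⟨X, rfl⟩

set_option maxHeartbeats 1000000

lemma hff2 : ff 2 = -1 := by rw [show (2:Fq) = -1 from by decide, map_neg]; simp

lemma hAk : (phim A3).val = !![(0:kk),1;-1,0] := by
  ext i j; fin_cases i <;> fin_cases j <;> simp [phi_val, A3, hff2]
lemma hBk : (phim B3).val = !![(1:kk),1;1,-1] := by
  ext i j; fin_cases i <;> fin_cases j <;> simp [phi_val, B3, hff2]
lemma hCk : (phim C3).val = !![(1:kk),-1;-1,-1] := by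
  ext i j; fin_cases i <;> fin_cases j <;> simp [phi_val, C3, hff2]

lemma scalar_of_center (z : GL (Fin 2) kk) (hz : z ∈ Subgroup.center (GL (Fin 2) kk)) :
    z.val = z.val 0 0 • (1 : Matrix (Fin 2) (Fin 2) kk) := by
  obtain ⟨h1, h2, h4⟩ := (mem_center_iff' z).mp hz
  ext i j; fin_cases i <;> fin_cases j <;>
    simp [Matrix.smul_apply, Matrix.one_apply, h1, h2, ← h4]

lemma conj_scalar (M N : GL (Fin 2) kk) (h : pim M * pim N * (pim M)⁻¹ = pim N) :
    ∃ ε : kk, M.val * N.val = ε • (N.val * M.val) := by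
  have hc := center_of_pgl_eq (M * N * M⁻¹) N
    (by rw [← h]; simp [_root_.map_mul, _root_.map_inv])
  refine ⟨(N⁻¹ * (M * N * M⁻¹)).val 0 0, ?_⟩
  have hz := scalar_of_center _ hc
  have hu : M * N = N * (N⁻¹ * (M * N * M⁻¹)) * M := by group
  have hv := congrArg Units.val hu
  rw [Units.val_mul, Units.val_mul, Units.val_mul, hz] at hv
  rw [hv, Matrix.mul_smul, Matrix.mul_one, Matrix.smul_mul]

lemma hIk : (phim (1 : GL (Fin 2) Fq)).val = 1 := by rw [_root_.map_one, Units.val_one]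

lemma central_case (h : PGL2 kk) (ha : h * pim (phim A3) * h⁻¹ = pim (phim A3))
    (hb : h * pim (phim B3) * h⁻¹ = pim (phim B3)) : h ∈ PGLsub ff := by
  obtain ⟨M, rfl⟩ : ∃ M, pim M = h := QuotientGroup.mk'_surjective _ h
  obtain ⟨ε, hea⟩ := conj_scalar M (phim A3) ha
  obtain ⟨δ, heb⟩ := conj_scalar M (phim B3) hb
  rw [hAk] at hea
  rw [hBk] at heb
  have e00 := congrArg (fun m => m 0 0) hea
  have e01 := congrArg (fun m => m 0 1) hea
  have e10 := congrArg (fun m => m 1 0) hea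
  have e11 := congrArg (fun m => m 1 1) hea
  simp [Matrix.mul_apply, Fin.sum_univ_two, Matrix.smul_apply, Matrix.vecMul,
    dotProduct, Matrix.vecHead, Matrix.vecTail] at e00 e01 e10 e11
  have f00 := congrArg (fun m => m 0 0) heb
  have f01 := congrArg (fun m => m 0 1) heb
  simp [Matrix.mul_apply, Fin.sum_univ_two, Matrix.smul_apply, Matrix.vecMul,
    dotProduct, Matrix.vecHead, Matrix.vecTail] at f00 f01
  have hdet : M.val 0 0 * M.val 1 1 - M.val 0 1 * M.val 1 0 ≠ 0 := by
    have hu : IsUnit (M.val.det) := Matrix.isUnits_det_units M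
    rw [Matrix.det_fin_two] at hu
    exact hu.ne_zero
  have h2 : (2 : kk) = -1 := by linear_combination h3
  have h2' : (2 : kk) ≠ 0 := by rw [h2]; simp
  have heps : ε * ε = 1 := by
    by_cases hp : M.val 0 0 = 0
    · have hq : M.val 0 1 ≠ 0 := by
        intro hq
        apply hdet
        rw [hp, hq]; ring
      have hz : M.val 0 1 * (ε * ε - 1) = 0 := by linear_combination e00 + ε * e11
      rcases mul_eq_zero.mp hz with h | h
      · exact absurd h hq
      · linear_combination h
    · have hz : M.val 0 0 * (ε * ε - 1) = 0 := by linear_combination -e01 - ε * e10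
      rcases mul_eq_zero.mp hz with h | h
      · exact absurd h hp
      · linear_combination h
  rcases mul_self_eq_one_iff.mp heps with hE | hE
  · subst hE
    have hs : M.val 1 1 = M.val 0 0 := by linear_combination e10
    have hr : M.val 1 0 = -M.val 0 1 := by linear_combination e11
    have hP2 : M.val 0 0 * (1 - δ) * 2 = 0 := by
      linear_combination f00 + f01 + δ * hr + δ * hs
    have hP : M.val 0 0 * (1 - δ) = 0 :=
      (mul_eq_zero.mp hP2).resolve_right h2'
    have hQ2 : M.val 0 1 * (1 + δ) * 2 = 0 := by
      linear_combination f00 - f01 + δ * hr - δ * hs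
    have hQ : M.val 0 1 * (1 + δ) = 0 :=
      (mul_eq_zero.mp hQ2).resolve_right h2'
    by_cases hp : M.val 0 0 = 0
    · -- M is a scalar multiple of A
      have hval : M.val = M.val 0 1 • (phim A3).val := by
        rw [hAk]
        ext i j
        fin_cases i <;> fin_cases j <;> simp [Matrix.smul_apply]
        · exact hp
        · linear_combination hr
        · linear_combination hs + hp
      rw [pgl_eq_of_smul M (phim A3) _ hval]; exact mem_PGL A3
    · have hd : (1 : kk) - δ = 0 := (mul_eq_zero.mp hP).resolve_left hp
      have hd' : (1 : kk) + δ ≠ 0 := by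
        have : δ = 1 := by linear_combination -hd
        rw [this]
        intro hc
        exact h2' (by linear_combination hc)
      have hq : M.val 0 1 = 0 := (mul_eq_zero.mp hQ).resolve_right hd'
      have hval : M.val = M.val 0 0 • (phim (1 : GL (Fin 2) Fq)).val := by
        rw [hIk]
        ext i j
        fin_cases i <;> fin_cases j <;> simp [Matrix.smul_apply, Matrix.one_apply]
        · exact hq
        · linear_combination hr - hq
        · linear_combination hs
      rw [pgl_eq_of_smul M (phim 1) _ hval]; exact mem_PGL 1
  · subst hE
    have hs : M.val 1 1 = -M.val 0 0 := by linear_combination e10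
    have hr : M.val 1 0 = M.val 0 1 := by linear_combination e11
    have hP2 : (M.val 0 0 + M.val 0 1) * (1 - δ) = 0 := by
      linear_combination f00 + δ * hr
    have hQ2 : (M.val 0 0 - M.val 0 1) * (1 + δ) = 0 := by
      linear_combination f01 + δ * hs
    by_cases hpq : M.val 0 0 + M.val 0 1 = 0
    · -- M is a scalar multiple of C
      have hval : M.val = M.val 0 0 • (phim C3).val := by
        rw [hCk]
        ext i j
        fin_cases i <;> fin_cases j <;> simp [Matrix.smul_apply]
        · linear_combination hpq
        · linear_combination hr + hpq
        · linear_combination hs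
      rw [pgl_eq_of_smul M (phim C3) _ hval]; exact mem_PGL C3
    · have hd : (1 : kk) - δ = 0 := (mul_eq_zero.mp hP2).resolve_left hpq
      have hd' : (1 : kk) + δ ≠ 0 := by
        have : δ = 1 := by linear_combination -hd
        rw [this]
        intro hc
        exact h2' (by linear_combination hc)
      have hq : M.val 0 0 - M.val 0 1 = 0 := (mul_eq_zero.mp hQ2).resolve_right hd'
      have hval : M.val = M.val 0 0 • (phim B3).val := by
        rw [hBk]
        ext i j
        fin_cases i <;> fin_cases j <;> simp [Matrix.smul_apply]
        · linear_combination -hq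
        · linear_combination hr - hq
        · linear_combination hs
      rw [pgl_eq_of_smul M (phim B3) _ hval]; exact mem_PGL B3

set_option maxHeartbeats 400000

open Matrix.SpecialLinearGroup in
lemma conj_mem (g : PGL2 kk) (hg : g ∈ PGLsub ff) (x : PGL2 kk) (hx : x ∈ PSLsub ff) :
    g * x * g⁻¹ ∈ PSLsub ff := by
  obtain ⟨G, rfl⟩ := hg
  obtain ⟨S, rfl⟩ := hx
  have hdet : ((G * toGL S * G⁻¹).val).det = 1 := by
    have h1 : G.val.det * (G⁻¹).val.det = 1 := by
      rw [← Matrix.det_mul, ← Units.val_mul, mul_inv_cancel, Units.val_one, Matrix.det_one]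
    have h2 : (S.val).det = 1 := S.2
    rw [Units.val_mul, Units.val_mul, Matrix.det_mul, Matrix.det_mul,
      show (toGL S).val = S.val from rfl, h2]
    linear_combination h1
  refine ⟨⟨(G * toGL S * G⁻¹).val, hdet⟩, ?_⟩
  show pim (phim (toGL ⟨(G * toGL S * G⁻¹).val, hdet⟩)) = _
  rw [show toGL (⟨(G * toGL S * G⁻¹).val, hdet⟩ : SpecialLinearGroup (Fin 2) Fq)
      = G * toGL S * G⁻¹ from Units.ext rfl]
  rw [_root_.map_mul, _root_.map_mul, _root_.map_inv, _root_.map_mul, _root_.map_mul,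
    _root_.map_inv]
  rfl

lemma sq_mem (x : PGL2 kk) (hx : x ∈ PSLsub ff) (hsq : x * x = 1) :
    x = pim (phim 1) ∨ x = pim (phim A3) ∨ x = pim (phim B3) ∨ x = pim (phim C3) := by
  obtain ⟨S, rfl⟩ := hx
  set U := phim (Matrix.SpecialLinearGroup.toGL S) with hU
  have hc : U * U ∈ Subgroup.center (GL (Fin 2) kk) := by
    have h1 : pim (U * U) = 1 := by rw [_root_.map_mul]; exact hsq
    rwa [show pim = QuotientGroup.mk' (Subgroup.center (GL (Fin 2) kk)) from rfl,
      QuotientGroup.mk'_apply, QuotientGroup.eq_one_iff] at h1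
  rw [mem_center_iff'] at hc
  obtain ⟨c1, c2, c3⟩ := hc
  have hval : ∀ i j, (U * U).val i j = ff ((S.val * S.val) i j) := by
    intro i j
    rw [hU, ← _root_.map_mul]
    exact phi_val _ i j
  rw [hval] at c1 c2
  rw [hval, hval] at c3
  have k1 : (S.val * S.val) 0 1 = 0 := ff.injective (by simpa using c1)
  have k2 : (S.val * S.val) 1 0 = 0 := ff.injective (by simpa using c2)
  have k3 : (S.val * S.val) 0 0 = (S.val * S.val) 1 1 := ff.injective c3
  have key : ∀ m : Matrix (Fin 2) (Fin 2) Fq, m.det = 1 → (m*m) 0 1 = 0 → (m*m) 1 0 = 0 →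
      (m*m) 0 0 = (m*m) 1 1 →
      (m = 1 ∨ m = -1 ∨ m = !![0,1;2,0] ∨ m = !![0,2;1,0] ∨ m = !![1,1;1,2] ∨ m = !![2,2;2,1]
        ∨ m = !![1,2;2,2] ∨ m = !![2,1;1,1]) := by decide
  have hS : (Matrix.SpecialLinearGroup.toGL S).val = S.val := rfl
  rcases key S.val S.2 k1 k2 k3 with h|h|h|h|h|h|h|h
  · exact Or.inl (push_eq _ 1 (Or.inl (by rw [hS, h]; decide)))
  · exact Or.inl (push_eq _ 1 (Or.inr (by rw [hS, h]; decide)))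
  · exact Or.inr (Or.inl (push_eq _ A3 (Or.inl (by rw [hS, h]; decide))))
  · exact Or.inr (Or.inl (push_eq _ A3 (Or.inr (by rw [hS, h]; decide))))
  · exact Or.inr (Or.inr (Or.inl (push_eq _ B3 (Or.inl (by rw [hS, h]; decide)))))
  · exact Or.inr (Or.inr (Or.inl (push_eq _ B3 (Or.inr (by rw [hS, h]; decide)))))
  · exact Or.inr (Or.inr (Or.inr (push_eq _ C3 (Or.inl (by rw [hS, h]; decide)))))
  · exact Or.inr (Or.inr (Or.inr (push_eq _ C3 (Or.inr (by rw [hS, h]; decide)))))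

lemma finish_case (g : PGL2 kk) (T : GL (Fin 2) Fq)
    (hu : g * pim (phim A3) * g⁻¹ = pim (phim T) * pim (phim A3) * (pim (phim T))⁻¹)
    (hv : g * pim (phim B3) * g⁻¹ = pim (phim T) * pim (phim B3) * (pim (phim T))⁻¹) :
    g ∈ PGLsub ff := by
  set t := pim (phim T) with ht
  have h1 : (t⁻¹ * g) * pim (phim A3) * (t⁻¹ * g)⁻¹ = pim (phim A3) := by
    have e : (t⁻¹ * g) * pim (phim A3) * (t⁻¹ * g)⁻¹
        = t⁻¹ * (g * pim (phim A3) * g⁻¹) * t := by group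
    rw [e, hu]; group
  have h2 : (t⁻¹ * g) * pim (phim B3) * (t⁻¹ * g)⁻¹ = pim (phim B3) := by
    have e : (t⁻¹ * g) * pim (phim B3) * (t⁻¹ * g)⁻¹
        = t⁻¹ * (g * pim (phim B3) * g⁻¹) * t := by group
    rw [e, hv]; group
  have hm := central_case _ h1 h2
  have : g = t * (t⁻¹ * g) := by group
  rw [this]
  exact mul_mem (mem_PGL T) hm

def Tac : GL (Fin 2) Fq := ⟨!![0,1;1,0], !![0,1;1,0], by decide, by decide⟩
def Tba : GL (Fin 2) Fq := ⟨!![0,1;1,2], !![1,1;1,0], by decide, by decide⟩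
def Tbc : GL (Fin 2) Fq := ⟨!![0,1;2,2], !![2,2;1,0], by decide, by decide⟩
def Tca : GL (Fin 2) Fq := ⟨!![0,1;2,1], !![1,2;1,0], by decide, by decide⟩
def Tcb : GL (Fin 2) Fq := ⟨!![0,1;1,1], !![2,1;1,0], by decide, by decide⟩

/-- The normalizer in `PGL₂(k)` (`k` an algebraic closure of `𝔽₃`) of `PSL₂(𝔽₃)` is
`PGL₂(𝔽₃)`. -/
theorem normalizer_psl_three :
    Subgroup.normalizer (PSLsub (algebraMap (ZMod 3) (AlgebraicClosure (ZMod 3))) :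
        Set (PGL2 (AlgebraicClosure (ZMod 3)))) =
      PGLsub (algebraMap (ZMod 3) (AlgebraicClosure (ZMod 3))) := by
  apply le_antisymm
  · intro g hg
    rw [Subgroup.mem_normalizer_iff] at hg
    have haP : pim (phim A3) ∈ PSLsub ff := by
      refine ⟨⟨!![0,1;2,0], by decide⟩, ?_⟩
      show pim (phim (Matrix.SpecialLinearGroup.toGL _)) = pim (phim A3)
      exact congrArg (fun u => pim (phim u)) (Units.ext rfl)
    have hbP : pim (phim B3) ∈ PSLsub ff := by
      refine ⟨⟨!![1,1;1,2], by decide⟩, ?_⟩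
      show pim (phim (Matrix.SpecialLinearGroup.toGL _)) = pim (phim B3)
      exact congrArg (fun u => pim (phim u)) (Units.ext rfl)
    have hga := (hg _).mp haP
    have hgb := (hg _).mp hbP
    have haa : pim (phim A3) * pim (phim A3) = 1 := by
      rw [← _root_.map_mul, ← _root_.map_mul,
        push_eq (A3 * A3) 1 (Or.inr (by decide))]
      simp
    have hbb : pim (phim B3) * pim (phim B3) = 1 := by
      rw [← _root_.map_mul, ← _root_.map_mul,
        push_eq (B3 * B3) 1 (Or.inr (by decide))]
      simp
    have hsa : (g * pim (phim A3) * g⁻¹) * (g * pim (phim A3) * g⁻¹) = 1 := by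
      have e : (g * pim (phim A3) * g⁻¹) * (g * pim (phim A3) * g⁻¹)
          = g * (pim (phim A3) * pim (phim A3)) * g⁻¹ := by group
      rw [e, haa]; group
    have hsb : (g * pim (phim B3) * g⁻¹) * (g * pim (phim B3) * g⁻¹) = 1 := by
      have e : (g * pim (phim B3) * g⁻¹) * (g * pim (phim B3) * g⁻¹)
          = g * (pim (phim B3) * pim (phim B3)) * g⁻¹ := by group
      rw [e, hbb]; group
    have hu := sq_mem _ hga hsa
    have hv := sq_mem _ hgb hsb
    have conj1 : ∀ y : PGL2 kk, g * y * g⁻¹ = pim (phim 1) → y = pim (phim 1) := by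
      intro y h
      have h1 : pim (phim (1 : GL (Fin 2) Fq)) = (1 : PGL2 kk) := by simp
      rw [h1] at h ⊢
      calc y = g⁻¹ * (g * y * g⁻¹) * g := by group
        _ = 1 := by rw [h]; group
    have cancel : ∀ y z w : PGL2 kk, g * y * g⁻¹ = w → g * z * g⁻¹ = w → y = z := by
      intro y z w h1 h2
      calc y = g⁻¹ * (g * y * g⁻¹) * g := by group
        _ = g⁻¹ * (g * z * g⁻¹) * g := by rw [h1, h2]
        _ = z := by group
    have neA1 : pim (phim A3) ≠ pim (phim 1) := fun h => by
      have := over_F A3 1 h; revert this; decide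
    have neB1 : pim (phim B3) ≠ pim (phim 1) := fun h => by
      have := over_F B3 1 h; revert this; decide
    have neAB : pim (phim A3) ≠ pim (phim B3) := fun h => by
      have := over_F A3 B3 h; revert this; decide
    rcases hu with h1 | h1 | h1 | h1
    · exact absurd (conj1 _ h1) neA1
    · rcases hv with h2 | h2 | h2 | h2
      · exact absurd (conj1 _ h2) neB1
      · exact absurd (cancel _ _ _ h1 h2) neAB
      · exact finish_case g A3 (h1.trans (conj_push A3 A3 A3 (by decide)).symm)
          (h2.trans (conj_push A3 B3 B3 (by decide)).symm)
      · exact finish_case g Tac (h1.trans (conj_push Tac A3 A3 (by decide)).symm)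
          (h2.trans (conj_push Tac B3 C3 (by decide)).symm)
    · rcases hv with h2 | h2 | h2 | h2
      · exact absurd (conj1 _ h2) neB1
      · exact finish_case g Tba (h1.trans (conj_push Tba A3 B3 (by decide)).symm)
          (h2.trans (conj_push Tba B3 A3 (by decide)).symm)
      · exact absurd (cancel _ _ _ h1 h2) neAB
      · exact finish_case g Tbc (h1.trans (conj_push Tbc A3 B3 (by decide)).symm)
          (h2.trans (conj_push Tbc B3 C3 (by decide)).symm)
    · rcases hv with h2 | h2 | h2 | h2
      · exact absurd (conj1 _ h2) neB1
      · exact finish_case g Tca (h1.trans (conj_push Tca A3 C3 (by decide)).symm)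
          (h2.trans (conj_push Tca B3 A3 (by decide)).symm)
      · exact finish_case g Tcb (h1.trans (conj_push Tcb A3 C3 (by decide)).symm)
          (h2.trans (conj_push Tcb B3 B3 (by decide)).symm)
      · exact absurd (cancel _ _ _ h1 h2) neAB
  · intro g hg
    rw [Subgroup.mem_normalizer_iff]
    intro x
    constructor
    · exact fun hx => conj_mem g hg x hx
    · intro hx
      have h2x := conj_mem g⁻¹ (inv_mem hg) _ hx
      rwa [show g⁻¹ * (g * x * g⁻¹) * g⁻¹⁻¹ = x from by group] at h2x
end
end

section
/- Let k be an algebraic closure of F_5. The normalizer in PGL_2(k) of the subgroup PSL_2(F_5) (embedded via the inclusion F_5 ↪ k) is equal to PGL_2(F_5) (embedded via the same inclusion). -/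
open Matrix

noncomputable section

instance : Fact (Nat.Prime 5) := ⟨by norm_num⟩

section Helpers

variable {F k : Type*} [Field F] [Field k]

-- scalar unit
def sUnit (c : kˣ) : GL (Fin 2) k :=
  ⟨(c : k) • 1, ((c⁻¹ : kˣ) : k) • 1, by simp [smul_smul], by simp [smul_smul]⟩

lemma sUnit_mem_center (c : kˣ) : sUnit c ∈ Subgroup.center (GL (Fin 2) k) := by
  rw [Subgroup.mem_center_iff]
  intro b
  ext : 1
  show (b : Matrix (Fin 2) (Fin 2) k) * ((c : k) • 1) = ((c : k) • 1) * (b : Matrix (Fin 2) (Fin 2) k)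
  simp

lemma center_is_scalar (z : GL (Fin 2) k) (hz : z ∈ Subgroup.center (GL (Fin 2) k)) :
    ∃ c : k, c ≠ 0 ∧ (z : Matrix (Fin 2) (Fin 2) k) = c • 1 := by
  rw [Subgroup.mem_center_iff] at hz
  set Z : Matrix (Fin 2) (Fin 2) k := (z : Matrix (Fin 2) (Fin 2) k) with hZ
  have h1 : Z * !![1,1;0,1] = !![1,1;0,1] * Z := by
    have := hz ⟨!![1,1;0,1], !![1,-1;0,1], by rw [Matrix.mul_fin_two]; norm_num; exact Matrix.one_fin_two.symm, by rw [Matrix.mul_fin_two]; norm_num; exact Matrix.one_fin_two.symm⟩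
    exact congrArg Units.val this |>.symm
  have h2 : Z * !![1,0;1,1] = !![1,0;1,1] * Z := by
    have := hz ⟨!![1,0;1,1], !![1,0;-1,1], by rw [Matrix.mul_fin_two]; norm_num; exact Matrix.one_fin_two.symm, by rw [Matrix.mul_fin_two]; norm_num; exact Matrix.one_fin_two.symm⟩
    exact congrArg Units.val this |>.symm
  have e10 : Z 1 0 = 0 := by
    have := congrFun (congrFun h1 0) 0
    simpa [Matrix.mul_apply, Fin.sum_univ_two] using this
  have e01 : Z 0 1 = 0 := by
    have := congrFun (congrFun h2 0) 0
    simpa [Matrix.mul_apply, Fin.sum_univ_two] using this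
  have e00 : Z 1 1 = Z 0 0 := by
    have := congrFun (congrFun h1 0) 1
    simp [Matrix.mul_apply, Fin.sum_univ_two, e01] at this
    exact this.symm
  refine ⟨Z 0 0, ?_, ?_⟩
  · intro h0
    have hzz : Z * ((z⁻¹ : GL (Fin 2) k) : Matrix (Fin 2) (Fin 2) k) = 1 := z.mul_inv
    have := congrFun (congrFun hzz 0) 0
    simp [Matrix.mul_apply, Fin.sum_univ_two, h0, e01] at this
  · ext i j
    fin_cases i <;> fin_cases j <;>
      simp [e10, e01, e00, Matrix.one_apply, Matrix.smul_apply]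

lemma kernel_vec (N : Matrix (Fin 2) (Fin 2) F) (hN : N ≠ 0) (hdet : N.det = 0) :
    ∃ v : Fin 2 → F, v ≠ 0 ∧ N.mulVec v = 0 := by
  rw [Matrix.det_fin_two] at hdet
  by_cases h0 : N 0 0 = 0 ∧ N 0 1 = 0
  · -- first row zero, use second row
    refine ⟨![N 1 1, -(N 1 0)], ?_, ?_⟩
    · intro hv
      apply hN
      have h11 := congrFun hv 0
      have h10 := congrFun hv 1
      simp at h11 h10
      ext i j
      fin_cases i <;> fin_cases j <;> simp [h0.1, h0.2, h11, h10]
    · ext i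
      fin_cases i <;>
        simp [Matrix.mulVec, dotProduct, Fin.sum_univ_two, h0.1, h0.2] <;> ring
  · refine ⟨![N 0 1, -(N 0 0)], ?_, ?_⟩
    · intro hv
      have h1 := congrFun hv 0
      have h2 := congrFun hv 1
      simp at h1 h2
      exact h0 ⟨h2, h1⟩
    · ext i
      fin_cases i
      · simp [Matrix.mulVec, dotProduct, Fin.sum_univ_two]
        ring
      · simp [Matrix.mulVec, dotProduct, Fin.sum_univ_two]
        linear_combination -hdet

lemma cross_zero (B : Matrix (Fin 2) (Fin 2) k) (hB : B ≠ 0) (v w : Fin 2 → k)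
    (hv : B.mulVec v = 0) (hw : B.mulVec w = 0) : w 0 * v 1 = w 1 * v 0 := by
  have hv0 := congrFun hv 0
  have hv1 := congrFun hv 1
  have hw0 := congrFun hw 0
  have hw1 := congrFun hw 1
  simp [Matrix.mulVec, dotProduct, Fin.sum_univ_two] at hv0 hv1 hw0 hw1
  -- some row of B is nonzero
  have : ∃ i, B i 0 ≠ 0 ∨ B i 1 ≠ 0 := by
    by_contra h
    push_neg at h
    apply hB
    ext i j
    fin_cases j
    · exact (h i).1
    · exact (h i).2
  obtain ⟨i, hi⟩ := this
  have hrv : B i 0 * v 0 + B i 1 * v 1 = 0 := by fin_cases i <;> assumption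
  have hrw : B i 0 * w 0 + B i 1 * w 1 = 0 := by fin_cases i <;> assumption
  rcases hi with hi | hi
  · have := mul_left_cancel₀ hi (?_ : B i 0 * (w 0 * v 1) = B i 0 * (w 1 * v 0))
    · exact this
    · linear_combination v 1 * hrw - w 1 * hrv
  · have := mul_left_cancel₀ hi (?_ : B i 1 * (w 0 * v 1) = B i 1 * (w 1 * v 0))
    · exact this
    · linear_combination w 0 * hrv - v 0 * hrw

lemma mem_span (v w : Fin 2 → k) (hv : v ≠ 0) (hcross : w 0 * v 1 = w 1 * v 0) :
    ∃ d : k, w = d • v := by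
  by_cases h0 : v 0 ≠ 0
  · refine ⟨w 0 / v 0, ?_⟩
    ext i
    fin_cases i
    · show w 0 = w 0 / v 0 * v 0
      field_simp
    · show w 1 = w 0 / v 0 * v 1
      field_simp
      linear_combination -hcross
  · push_neg at h0
    have h1 : v 1 ≠ 0 := by
      intro h1
      apply hv
      ext i; fin_cases i <;> simp [h0, h1]
    refine ⟨w 1 / v 1, ?_⟩
    ext i
    fin_cases i
    · show w 0 = w 1 / v 1 * v 0
      field_simp
      linear_combination hcross
    · show w 1 = w 1 / v 1 * v 1
      field_simp

lemma map_mulVec' (f : F →+* k) (N : Matrix (Fin 2) (Fin 2) F) (x : Fin 2 → F) :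
    (N.map f).mulVec (fun i => f (x i)) = fun i => f (N.mulVec x i) := by
  funext i
  simp [Matrix.mulVec, dotProduct, Matrix.map_apply, Fin.sum_univ_two]

lemma map_mat_injective (f : F →+* k) (M M' : Matrix (Fin 2) (Fin 2) F)
    (h : M.map f = M'.map f) : M = M' := by
  ext i j
  have := congrFun (congrFun h i) j
  simp [Matrix.map_apply] at this
  exact f.injective this

lemma eigen_key (f : F →+* k)
    (A A' : Matrix (Fin 2) (Fin 2) k) (hAA' : A * A' = 1) (hA'A : A' * A = 1)
    (t s : Matrix (Fin 2) (Fin 2) F) (hdt : t.det = 1) (hds : s.det = 1)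
    (htr : t.trace = 2) (htne : t ≠ 1)
    (e : Fin 2 → F) (he : t.mulVec e = e)
    (c : k) (hconj : A * t.map f = (c • s.map f) * A) :
    ∃ (v : Fin 2 → F) (d : k), v ≠ 0 ∧ A.mulVec (fun i => f (e i)) = d • (fun i => f (v i)) := by
  have hdetA : A.det ≠ 0 := by
    intro h
    have : A.det * A'.det = 1 := by rw [← Matrix.det_mul, hAA', Matrix.det_one]
    rw [h, zero_mul] at this
    exact zero_ne_one this
  have map_det : ∀ M : Matrix (Fin 2) (Fin 2) F, (M.map f).det = f M.det := by
    intro M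
    rw [RingHom.map_det]
    rfl
  have hdtm : (t.map f).det = 1 := by rw [map_det, hdt, _root_.map_one]
  have hdsm : (s.map f).det = 1 := by rw [map_det, hds, _root_.map_one]
  -- c² = 1
  have hc2 : c * c = 1 := by
    have hd := congrArg Matrix.det hconj
    rw [Matrix.det_mul, Matrix.det_mul, Matrix.det_smul, hdtm, hdsm] at hd
    simp at hd
    have h2 : (c * c - 1) * A.det = 0 := by linear_combination -hd
    rcases mul_eq_zero.mp h2 with h | h
    · exact sub_eq_zero.mp h
    · exact absurd h hdetA
  -- c is the image of ε = ±1
  obtain ⟨ε, hε, hε2⟩ : ∃ ε : F, f ε = c ∧ ε * ε = 1 := by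
    have : (c - 1) * (c + 1) = 0 := by linear_combination hc2
    rcases mul_eq_zero.mp this with h | h
    · exact ⟨1, by rw [_root_.map_one]; exact (sub_eq_zero.mp h).symm, by ring⟩
    · refine ⟨-1, ?_, by ring⟩
      rw [_root_.map_neg, _root_.map_one]
      have : c = -1 := eq_neg_of_add_eq_zero_left h
      rw [this]
  set T : Matrix (Fin 2) (Fin 2) F := ε • s with hT
  have hTmap : T.map f = c • s.map f := by
    ext i j
    simp [Matrix.map_apply, hT, ← hε]
  have hconj' : A * t.map f * A' = T.map f := by
    rw [hTmap, hconj, mul_assoc, hAA', mul_one]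
  -- trace T = 2
  have htrT : T.trace = 2 := by
    apply f.injective
    have : (T.map f).trace = (t.map f).trace := by
      rw [← hconj', Matrix.trace_mul_comm, ← mul_assoc, hA'A, one_mul]
    have mt : ∀ M : Matrix (Fin 2) (Fin 2) F, (M.map f).trace = f M.trace := by
      intro M
      simp [Matrix.trace, Matrix.diag, Matrix.map_apply, Fin.sum_univ_two]
    rw [mt, mt, htr] at this
    exact this
  -- det T = 1
  have hdetT : T.det = 1 := by
    apply f.injective
    have : (T.map f).det = 1 := by
      rw [← hconj', Matrix.det_mul, Matrix.det_mul, hdtm]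
      have : A.det * A'.det = 1 := by rw [← Matrix.det_mul, hAA', Matrix.det_one]
      rw [mul_one]
      linear_combination this
    rw [map_det] at this
    rw [this, _root_.map_one]
  -- T ≠ 1
  have hTne : T ≠ 1 := by
    intro h
    apply htne
    have h1 : T.map f = 1 := by rw [h]; ext i j; simp [Matrix.map_apply, Matrix.one_apply, apply_ite f]
    have h2 : t.map f = 1 := by
      have := hconj'
      rw [h1] at this
      have h3 : A' * (A * t.map f * A') * A = A' * 1 * A := by rw [this]
      rw [mul_one, hA'A] at h3
      calc t.map f = (A' * A) * t.map f * (A' * A) := by rw [hA'A, one_mul, mul_one]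
        _ = A' * (A * t.map f * A') * A := by simp only [mul_assoc]
        _ = 1 := h3
    apply map_mat_injective f
    rw [h2]
    ext i j; simp [Matrix.map_apply, Matrix.one_apply, apply_ite f]
  -- N = T - 1 is nonzero nilpotent
  set N : Matrix (Fin 2) (Fin 2) F := T - 1 with hN
  have hNne : N ≠ 0 := sub_ne_zero.mpr hTne
  have hNdet : N.det = 0 := by
    rw [Matrix.det_fin_two] at hdetT ⊢
    rw [Matrix.trace_fin_two] at htrT
    simp [hN, Matrix.sub_apply, Matrix.one_apply]
    linear_combination hdetT - htrT
  obtain ⟨v, hv0, hvker⟩ := kernel_vec N hNne hNdet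
  set B : Matrix (Fin 2) (Fin 2) k := N.map f with hB
  have hBeq : B = T.map f - 1 := by
    ext i j; simp [hB, hN, Matrix.map_apply, Matrix.sub_apply, Matrix.one_apply, apply_ite f]
  have hBne : B ≠ 0 := by
    intro h
    apply hNne
    apply map_mat_injective f
    rw [← hB, h]; ext i j; simp [Matrix.map_apply]
  have hBv : B.mulVec (fun i => f (v i)) = 0 := by
    rw [hB, map_mulVec' f, hvker]
    funext i; simp
  set w : Fin 2 → k := A.mulVec (fun i => f (e i)) with hw
  have hTA : T.map f * A = A * t.map f := by rw [hTmap, ← hconj]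
  have hTw : (T.map f).mulVec w = w := by
    rw [hw, Matrix.mulVec_mulVec, hTA, ← Matrix.mulVec_mulVec, map_mulVec' f, he]
  have hBw : B.mulVec w = 0 := by
    rw [hBeq, Matrix.sub_mulVec, hTw, Matrix.one_mulVec, sub_self]
  have hcross := cross_zero B hBne (fun i => f (v i)) w hBv hBw
  have hfv : (fun i => f (v i)) ≠ 0 := by
    intro h
    apply hv0
    funext i
    have := congrFun h i
    simp at this
    simpa using this
  obtain ⟨d, hd⟩ := mem_span (fun i => f (v i)) w hfv hcross
  exact ⟨v, d, hv0, hd⟩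

lemma coe_glmap (f : F →+* k) (G : GL (Fin 2) F) :
    ((Matrix.GeneralLinearGroup.map f G : GL (Fin 2) k) : Matrix (Fin 2) (Fin 2) k) =
      (G : Matrix (Fin 2) (Fin 2) F).map f := rfl

lemma coe_toGL (s : Matrix.SpecialLinearGroup (Fin 2) F) :
    ((Matrix.SpecialLinearGroup.toGL s : GL (Fin 2) F) : Matrix (Fin 2) (Fin 2) F) =
      (s : Matrix (Fin 2) (Fin 2) F) := rfl

/-- conjugation by an element of `PGL₂(F)` preserves `PSL₂(F)` inside `PGL₂(k)`. -/
lemma conj_mem_psl (f : F →+* k) (G : GL (Fin 2) F) (h : PGL2 k) (hh : h ∈ PSLsub f) :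
    toPGL2 k (Matrix.GeneralLinearGroup.map f G) * h *
      (toPGL2 k (Matrix.GeneralLinearGroup.map f G))⁻¹ ∈ PSLsub f := by
  obtain ⟨s, rfl⟩ := hh
  have hdet : ((G : Matrix (Fin 2) (Fin 2) F) * (s : Matrix (Fin 2) (Fin 2) F) *
      ((G⁻¹ : GL (Fin 2) F) : Matrix (Fin 2) (Fin 2) F)).det = 1 := by
    have h1 : ((G : Matrix (Fin 2) (Fin 2) F) * ((G⁻¹ : GL (Fin 2) F) : Matrix (Fin 2) (Fin 2) F)).det = 1 := by
      rw [← Units.val_mul, mul_inv_cancel]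
      simp
    rw [Matrix.det_mul, Matrix.det_mul, s.2, mul_one, ← Matrix.det_mul] at *
    exact h1
  set s' : Matrix.SpecialLinearGroup (Fin 2) F := ⟨_, hdet⟩ with hs'
  refine MonoidHom.mem_range.mpr ⟨s', ?_⟩
  have hglev : Matrix.SpecialLinearGroup.toGL s' = G * Matrix.SpecialLinearGroup.toGL s * G⁻¹ := by
    apply Units.ext
    rw [coe_toGL]
    simp [hs', Units.val_mul, coe_toGL]
  show toPGL2 k (Matrix.GeneralLinearGroup.map f (Matrix.SpecialLinearGroup.toGL s')) = _
  rw [hglev, _root_.map_mul, _root_.map_mul, _root_.map_mul, _root_.map_mul, map_inv, map_inv]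
  rfl

/-- the main extraction step: if conjugation by `g` sends the class of the unipotent `t`
into `PSL₂(F)`, then `g` maps the eigenvector of `t` to a scalar multiple of an `F`-rational
vector. -/
lemma extract (f : F →+* k) (g : GL (Fin 2) k)
    (tsl : Matrix.SpecialLinearGroup (Fin 2) F)
    (htr : (tsl : Matrix (Fin 2) (Fin 2) F).trace = 2)
    (htne : (tsl : Matrix (Fin 2) (Fin 2) F) ≠ 1)
    (e : Fin 2 → F) (he : (tsl : Matrix (Fin 2) (Fin 2) F).mulVec e = e)
    (hmem : toPGL2 k g * toPGL2 k (Matrix.GeneralLinearGroup.map f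
        (Matrix.SpecialLinearGroup.toGL tsl)) * (toPGL2 k g)⁻¹ ∈ PSLsub f) :
    ∃ (v : Fin 2 → F) (d : k), v ≠ 0 ∧
      (g : Matrix (Fin 2) (Fin 2) k).mulVec (fun i => f (e i)) = d • (fun i => f (v i)) := by
  obtain ⟨ssl, hs⟩ := hmem
  set X : GL (Fin 2) k := Matrix.GeneralLinearGroup.map f (Matrix.SpecialLinearGroup.toGL tsl)
    with hX
  have hs2 : toPGL2 k (Matrix.GeneralLinearGroup.map f (Matrix.SpecialLinearGroup.toGL ssl)) =
      toPGL2 k (g * X * g⁻¹) := by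
    rw [_root_.map_mul, _root_.map_mul, map_inv]
    exact hs
  obtain ⟨z, hz, hzeq⟩ := (QuotientGroup.mk'_eq_mk' (Subgroup.center (GL (Fin 2) k))).mp hs2
  obtain ⟨c, hc0, hcz⟩ := center_is_scalar z hz
  have hmat := congrArg Units.val hzeq
  rw [Units.val_mul, Units.val_mul, Units.val_mul, hcz, coe_glmap, coe_glmap, coe_toGL,
    coe_toGL] at hmat
  set A : Matrix (Fin 2) (Fin 2) k := (g : Matrix (Fin 2) (Fin 2) k) with hA
  set A' : Matrix (Fin 2) (Fin 2) k := ((g⁻¹ : GL (Fin 2) k) : Matrix (Fin 2) (Fin 2) k)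
    with hA'
  have hAA' : A * A' = 1 := by rw [hA, hA', ← Units.val_mul, mul_inv_cancel, Units.val_one]
  have hA'A : A' * A = 1 := by rw [hA, hA', ← Units.val_mul, inv_mul_cancel, Units.val_one]
  have hconj : A * (tsl : Matrix (Fin 2) (Fin 2) F).map f =
      (c • (ssl : Matrix (Fin 2) (Fin 2) F).map f) * A := by
    have h1 : (ssl : Matrix (Fin 2) (Fin 2) F).map f * (c • 1) =
        c • (ssl : Matrix (Fin 2) (Fin 2) F).map f := by
      rw [Matrix.mul_smul, mul_one]
    have h2 : c • (ssl : Matrix (Fin 2) (Fin 2) F).map f =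
        A * (tsl : Matrix (Fin 2) (Fin 2) F).map f * A' := h1.symm.trans hmat
    rw [h2, mul_assoc, hA'A, mul_one]
  exact eigen_key f A A' hAA' hA'A _ _ tsl.2 ssl.2 htr htne e he c hconj

end Helpers

set_option maxHeartbeats 2000000 in
/-- The normalizer in `PGL₂(k)` (`k` an algebraic closure of `𝔽₅`) of `PSL₂(𝔽₅)` is
`PGL₂(𝔽₅)`. -/
theorem normalizer_psl_five :
    Subgroup.normalizer (PSLsub (algebraMap (ZMod 5) (AlgebraicClosure (ZMod 5))) : Set (PGL2 (AlgebraicClosure (ZMod 5)))) =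
      PGLsub (algebraMap (ZMod 5) (AlgebraicClosure (ZMod 5))) := by
  set K := AlgebraicClosure (ZMod 5) with hK
  set f := algebraMap (ZMod 5) K with hf
  refine le_antisymm ?_ ?_
  · -- hard direction: normalizer ≤ PGL₂(𝔽₅)
    intro x hx
    rw [Subgroup.mem_normalizer_iff] at hx
    obtain ⟨g, rfl⟩ : ∃ g, toPGL2 K g = x := QuotientGroup.mk'_surjective _ x
    set A : Matrix (Fin 2) (Fin 2) K := (g : Matrix (Fin 2) (Fin 2) K) with hA
    have hA'A : ((g⁻¹ : GL (Fin 2) K) : Matrix (Fin 2) (Fin 2) K) * A = 1 := by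
      rw [hA, ← Units.val_mul, inv_mul_cancel, Units.val_one]
    have hAA' : A * ((g⁻¹ : GL (Fin 2) K) : Matrix (Fin 2) (Fin 2) K) = 1 := by
      rw [hA, ← Units.val_mul, mul_inv_cancel, Units.val_one]
    have hAinv : ∀ y : Fin 2 → K, A.mulVec y = 0 → y = 0 := by
      intro y hy
      have h2 : ((g⁻¹ : GL (Fin 2) K) : Matrix (Fin 2) (Fin 2) K).mulVec (A.mulVec y) = y := by
        rw [Matrix.mulVec_mulVec, hA'A, Matrix.one_mulVec]
      rw [hy, Matrix.mulVec_zero] at h2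
      exact h2.symm
    have hdetA : A.det ≠ 0 := by
      intro h
      have h1 : A.det * ((g⁻¹ : GL (Fin 2) K) : Matrix (Fin 2) (Fin 2) K).det = 1 := by
        rw [← Matrix.det_mul, hAA', Matrix.det_one]
      rw [h, zero_mul] at h1
      exact zero_ne_one h1
    -- the three unipotents
    obtain ⟨vI, a, hvI, hwI⟩ := extract f g ⟨!![1,1;0,1], by decide⟩ (by decide) (by decide)
      ![1,0] (by decide) ((hx _).mp ⟨⟨!![1,1;0,1], by decide⟩, rfl⟩)
    obtain ⟨vO, b, hvO, hwO⟩ := extract f g ⟨!![1,0;1,1], by decide⟩ (by decide) (by decide)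
      ![0,1] (by decide) ((hx _).mp ⟨⟨!![1,0;1,1], by decide⟩, rfl⟩)
    obtain ⟨vD, c, hvD, hwD⟩ := extract f g ⟨!![0,1;-1,2], by decide⟩ (by decide) (by decide)
      ![1,1] (by decide) ((hx _).mp ⟨⟨!![0,1;-1,2], by decide⟩, rfl⟩)
    have hcol0 : ∀ i, A i 0 = a * f (vI i) := by
      intro i
      have h := congrFun hwI i
      simpa [Matrix.mulVec, dotProduct, Fin.sum_univ_two] using h
    have hcol1 : ∀ i, A i 1 = b * f (vO i) := by
      intro i
      have h := congrFun hwO i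
      simpa [Matrix.mulVec, dotProduct, Fin.sum_univ_two] using h
    have hsum : ∀ i, A i 0 + A i 1 = c * f (vD i) := by
      intro i
      have h := congrFun hwD i
      simpa [Matrix.mulVec, dotProduct, Fin.sum_univ_two] using h
    -- nonvanishing of the scalars
    have ha0 : a ≠ 0 := by
      intro h
      rw [h, zero_smul] at hwI
      have := congrFun (hAinv _ hwI) 0
      simp at this
    have hb0 : b ≠ 0 := by
      intro h
      rw [h, zero_smul] at hwO
      have := congrFun (hAinv _ hwO) 1
      simp at this
    have hc0 : c ≠ 0 := by
      intro h
      rw [h, zero_smul] at hwD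
      have := congrFun (hAinv _ hwD) 0
      simp at this
    -- independence of vI, vO
    set d : ZMod 5 := vI 0 * vO 1 - vI 1 * vO 0 with hd_def
    have hfd_eq : f d = f (vI 0) * f (vO 1) - f (vI 1) * f (vO 0) := by
      rw [hd_def, map_sub, _root_.map_mul, _root_.map_mul]
    have hdetA_eq : A.det = a * b * f d := by
      rw [Matrix.det_fin_two, hcol0 0, hcol0 1, hcol1 0, hcol1 1, hfd_eq]
      ring
    have hfd : f d ≠ 0 := by
      intro h
      rw [hdetA_eq, h, mul_zero] at hdetA
      exact hdetA rfl
    have hd0 : d ≠ 0 := by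
      intro h
      rw [h, map_zero] at hfd
      exact hfd rfl
    -- solve for vD in terms of vI, vO over 𝔽₅
    set al : ZMod 5 := (vD 0 * vO 1 - vD 1 * vO 0) / d with hal_def
    set be : ZMod 5 := (vI 0 * vD 1 - vI 1 * vD 0) / d with hbe_def
    have hvD_eq : ∀ i, vD i = al * vI i + be * vO i := by
      intro i
      have key : vD i * d = (vD 0 * vO 1 - vD 1 * vO 0) * vI i + (vI 0 * vD 1 - vI 1 * vD 0) * vO i := by
        rw [hd_def]
        fin_cases i <;> simp only [Fin.zero_eta, Fin.mk_one] <;> ring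
      rw [hal_def, hbe_def]
      field_simp
      linear_combination key
    -- transfer to K and identify the scalars
    have hXY : ∀ i, (a - c * f al) * f (vI i) + (b - c * f be) * f (vO i) = 0 := by
      intro i
      have hv := congrArg f (hvD_eq i)
      rw [map_add, _root_.map_mul, _root_.map_mul] at hv
      have e := hsum i
      rw [hcol0 i, hcol1 i] at e
      linear_combination e + c * hv
    have hXz : a = c * f al := by
      have h0 := hXY 0
      have h1 := hXY 1
      have h2 : (a - c * f al) * (f (vI 0) * f (vO 1) - f (vI 1) * f (vO 0)) = 0 := by
        linear_combination f (vO 1) * h0 - f (vO 0) * h1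
      rw [← hfd_eq] at h2
      rcases mul_eq_zero.mp h2 with h | h
      · exact eq_of_sub_eq_zero h
      · exact absurd h hfd
    have hYz : b = c * f be := by
      have h0 := hXY 0
      have h1 := hXY 1
      have h2 : (b - c * f be) * (f (vI 0) * f (vO 1) - f (vI 1) * f (vO 0)) = 0 := by
        linear_combination f (vI 0) * h1 - f (vI 1) * h0
      rw [← hfd_eq] at h2
      rcases mul_eq_zero.mp h2 with h | h
      · exact eq_of_sub_eq_zero h
      · exact absurd h hfd
    have hal0 : al ≠ 0 := by
      intro h
      rw [h, map_zero, mul_zero] at hXz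
      exact ha0 hXz
    have hbe0 : be ≠ 0 := by
      intro h
      rw [h, map_zero, mul_zero] at hYz
      exact hb0 hYz
    -- the 𝔽₅-matrix representing g up to scalar
    set Mfin : Matrix (Fin 2) (Fin 2) (ZMod 5) :=
      !![al * vI 0, be * vO 0; al * vI 1, be * vO 1] with hMfin
    have hMdet : Mfin.det ≠ 0 := by
      have : Mfin.det = al * be * d := by
        rw [hMfin, Matrix.det_fin_two_of, hd_def]
        ring
      rw [this]
      exact mul_ne_zero (mul_ne_zero hal0 hbe0) hd0
    have hU : IsUnit Mfin := (Matrix.isUnit_iff_isUnit_det Mfin).mpr (isUnit_iff_ne_zero.mpr hMdet)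
    have hAeq : Mfin.map f * ((c : K) • (1 : Matrix (Fin 2) (Fin 2) K)) = A := by
      rw [Matrix.mul_smul, mul_one]
      ext i j
      fin_cases i <;> fin_cases j <;>
        simp [hMfin, Matrix.map_apply, hcol0, hcol1, hXz, hYz, _root_.map_mul] <;> ring
    refine MonoidHom.mem_range.mpr ⟨hU.unit, ?_⟩
    show toPGL2 K (Matrix.GeneralLinearGroup.map f hU.unit) = toPGL2 K g
    refine (QuotientGroup.mk'_eq_mk' (Subgroup.center (GL (Fin 2) K))).mpr
      ⟨sUnit (Units.mk0 c hc0), sUnit_mem_center _, ?_⟩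
    apply Units.ext
    rw [Units.val_mul, coe_glmap, IsUnit.unit_spec]
    exact hAeq
  · -- easy direction: PGL₂(𝔽₅) ≤ normalizer
    intro x hx
    obtain ⟨G, rfl⟩ := MonoidHom.mem_range.mp hx
    rw [Subgroup.mem_normalizer_iff]
    simp only [MonoidHom.comp_apply]
    intro h
    constructor
    · intro hh
      exact conj_mem_psl f G h hh
    · intro hh
      have h2 := conj_mem_psl f G⁻¹ _ hh
      have hyinv : toPGL2 K (Matrix.GeneralLinearGroup.map f G⁻¹) =
          (toPGL2 K (Matrix.GeneralLinearGroup.map f G))⁻¹ := by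
        rw [map_inv, map_inv]
      rw [hyinv] at h2
      have h3 : (toPGL2 K (Matrix.GeneralLinearGroup.map f G))⁻¹ *
          (toPGL2 K (Matrix.GeneralLinearGroup.map f G) * h *
           (toPGL2 K (Matrix.GeneralLinearGroup.map f G))⁻¹) *
          ((toPGL2 K (Matrix.GeneralLinearGroup.map f G))⁻¹)⁻¹ = h := by group
      rw [h3] at h2
      exact h2
end
end

section
/- Let k be an algebraic closure of F_3, let G be a subgroup of PGL_2(k), and let N be a normal subgroup of G such that the quotient G/N is abelian. If N is conjugate in PGL_2(k) to PSL_2(F_3), then G is conjugate in PGL_2(k) to PSL_2(F_3) or to PGL_2(F_3). -/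
open Matrix

noncomputable section

namespace ConjAux

abbrev kk := AlgebraicClosure (ZMod 3)
abbrev ff : ZMod 3 →+* kk := algebraMap (ZMod 3) kk

lemma scalar_of_central {u : GL (Fin 2) kk} (h : u ∈ Subgroup.center (GL (Fin 2) kk)) :
    ∃ c : kk, u.val = c • 1 := by
  rw [Subgroup.mem_center_iff] at h
  have : ∀ t : TransvectionStruct (Fin 2) kk, Commute t.toMatrix u.val := by
    intro t
    have h2 := congrArg Units.val (h ⟨t.toMatrix, t.inv.toMatrix, t.mul_inv, t.inv_mul⟩)
    simpa [Commute, SemiconjBy] using h2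
  obtain ⟨c, hc⟩ := Matrix.mem_range_scalar_of_commute_transvectionStruct this
  exact ⟨c, by rw [← hc, Matrix.scalar_apply, Matrix.smul_one_eq_diagonal]⟩

lemma central_of_scalar {u : GL (Fin 2) kk} (c : kk) (h : u.val = c • 1) :
    u ∈ Subgroup.center (GL (Fin 2) kk) := by
  rw [Subgroup.mem_center_iff]
  intro g
  ext
  simp [h, Matrix.mul_smul, Matrix.smul_mul]

lemma unit_scalar_ne_zero {n : GL (Fin 2) kk} {c : kk} (hc : n.val = c • 1) : c ≠ 0 := by
  rintro rfl
  have h1 := n.mul_inv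
  rw [hc] at h1
  simp only [zero_smul, zero_mul] at h1
  exact one_ne_zero h1.symm

/-- Equality in PGL₂ iff the values differ by a scalar. -/
lemma toPGL2_eq_iff (y z : GL (Fin 2) kk) :
    toPGL2 kk y = toPGL2 kk z ↔ ∃ c : kk, y.val = c • z.val := by
  constructor
  · intro h
    rw [toPGL2, QuotientGroup.mk'_eq_mk'] at h
    obtain ⟨n, hn, rfl⟩ := h
    obtain ⟨c, hc⟩ := scalar_of_central hn
    refine ⟨c⁻¹, ?_⟩
    rw [Units.val_mul, hc, Matrix.mul_smul, mul_one, smul_smul,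
      inv_mul_cancel₀ (unit_scalar_ne_zero hc), one_smul]
  · rintro ⟨c, hc⟩
    have hc0 : c ≠ 0 := by
      rintro rfl
      have h1 := y.mul_inv
      rw [show y.val = 0 by simpa using hc, zero_mul] at h1
      exact one_ne_zero h1.symm
    rw [toPGL2, QuotientGroup.mk'_eq_mk']
    refine ⟨y⁻¹ * z, central_of_scalar c⁻¹ ?_, by group⟩
    rw [Units.val_mul, Matrix.coe_units_inv, hc]
    have hinv : (c • z.val)⁻¹ = c⁻¹ • (z.val)⁻¹ := by
      refine Matrix.inv_eq_left_inv ?_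
      rw [Matrix.smul_mul, Matrix.mul_smul, smul_smul, inv_mul_cancel₀ hc0, one_smul,
        Matrix.nonsing_inv_mul _ (Matrix.isUnits_det_units z)]
    rw [hinv, Matrix.smul_mul, Matrix.nonsing_inv_mul _ (Matrix.isUnits_det_units z)]

end ConjAux

namespace ConjAux
/-- The composite `GL₂(𝔽₃) → PGL₂(k)`. -/
def Φ : GL (Fin 2) (ZMod 3) →* PGL2 kk :=
  (toPGL2 kk).comp (Matrix.GeneralLinearGroup.map ff)

def I0 : GL (Fin 2) (ZMod 3) := ⟨!![0,1;-1,0], !![0,-1;1,0], by decide, by decide⟩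
def J0 : GL (Fin 2) (ZMod 3) := ⟨!![1,1;1,-1], !![-1,-1;-1,1], by decide, by decide⟩
def K0 : GL (Fin 2) (ZMod 3) := ⟨!![1,-1;-1,-1], !![-1,1;1,1], by decide, by decide⟩
def D0 : GL (Fin 2) (ZMod 3) := ⟨!![1,0;0,-1], !![1,0;0,-1], by decide, by decide⟩

lemma ff_inj : Function.Injective ff := by
  haveI : Fact (Nat.Prime 3) := ⟨by norm_num⟩
  exact (algebraMap (ZMod 3) kk).injective

lemma Phi_val (w : GL (Fin 2) (ZMod 3)) :
    (Matrix.GeneralLinearGroup.map ff w).val = w.val.map ff := rfl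

lemma Phi_eq_of_scalar {u v : GL (Fin 2) (ZMod 3)} (c : ZMod 3) (h : u.val = c • v.val) :
    Φ u = Φ v := by
  show toPGL2 kk _ = toPGL2 kk _
  rw [toPGL2_eq_iff]
  refine ⟨ff c, ?_⟩
  rw [Phi_val, Phi_val, h]
  ext i j
  simp [Matrix.map_apply]

lemma Phi_neg (v : GL (Fin 2) (ZMod 3)) : Φ (-v) = Φ v := by
  refine Phi_eq_of_scalar (-1) ?_
  rw [Units.val_neg, neg_one_smul]

lemma Phi_eq_of_pm {u v : GL (Fin 2) (ZMod 3)} (h : u = v ∨ u = -v) : Φ u = Φ v := by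
  rcases h with rfl | rfl
  · rfl
  · exact Phi_neg v

lemma Phi_one_pullback {w : GL (Fin 2) (ZMod 3)} (h : Φ w = 1) :
    ∃ c : ZMod 3, w.val = c • 1 := by
  have h1 : toPGL2 kk (Matrix.GeneralLinearGroup.map ff w) = toPGL2 kk 1 := by
    rw [_root_.map_one]; exact h
  rw [toPGL2_eq_iff] at h1
  obtain ⟨c, hc⟩ := h1
  rw [Phi_val] at hc
  have e01 : ff (w.val 0 1) = 0 := by
    have := congrFun (congrFun hc 0) 1
    simpa [Matrix.map_apply] using this
  have e10 : ff (w.val 1 0) = 0 := by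
    have := congrFun (congrFun hc 1) 0
    simpa [Matrix.map_apply] using this
  have e00 : ff (w.val 0 0) = c := by
    have := congrFun (congrFun hc 0) 0
    simpa [Matrix.map_apply] using this
  have e11 : ff (w.val 1 1) = c := by
    have := congrFun (congrFun hc 1) 1
    simpa [Matrix.map_apply] using this
  refine ⟨w.val 0 0, ?_⟩
  have h01 : w.val 0 1 = 0 := ff_inj (by rw [e01, map_zero])
  have h10 : w.val 1 0 = 0 := ff_inj (by rw [e10, map_zero])
  have hdiag : w.val 1 1 = w.val 0 0 := ff_inj (by rw [e11, e00])
  ext i j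
  fin_cases i <;> fin_cases j <;>
    simp [h01, h10, hdiag, Matrix.one_apply]

lemma Phi_pullback {u v : GL (Fin 2) (ZMod 3)} (h : Φ u = Φ v) :
    ∃ c : ZMod 3, u.val = c • v.val := by
  have h1 : Φ (v⁻¹ * u) = 1 := by
    rw [_root_.map_mul, _root_.map_inv, h, inv_mul_cancel]
  obtain ⟨c, hc⟩ := Phi_one_pullback h1
  refine ⟨c, ?_⟩
  have : u = v * (v⁻¹ * u) := by group
  rw [this, Units.val_mul, hc, Matrix.mul_smul, mul_one]

end ConjAux

namespace ConjAux

abbrev AA : Subgroup (PGL2 kk) := PSLsub ff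
abbrev SS : Subgroup (PGL2 kk) := PGLsub ff

lemma mem_SS (u : GL (Fin 2) (ZMod 3)) : Φ u ∈ SS := ⟨u, rfl⟩

lemma mem_AA_of_det {u : GL (Fin 2) (ZMod 3)} (h : u.val.det = 1) : Φ u ∈ AA := by
  refine ⟨⟨u.val, h⟩, ?_⟩
  show Φ (Matrix.SpecialLinearGroup.toGL ⟨u.val, h⟩) = Φ u
  congr 1
  exact Units.ext rfl

lemma AA_le_SS : AA ≤ SS := by
  rintro x ⟨M, rfl⟩
  exact ⟨Matrix.SpecialLinearGroup.toGL M, rfl⟩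

lemma mem_AA_I0 : Φ I0 ∈ AA := mem_AA_of_det (by decide)
lemma mem_AA_J0 : Φ J0 ∈ AA := mem_AA_of_det (by decide)
lemma mem_AA_K0 : Φ K0 ∈ AA := mem_AA_of_det (by decide)

/-- every element of AA is Φ of an SL₂(𝔽₃)-matrix -/
lemma AA_elt {a : PGL2 kk} (ha : a ∈ AA) :
    ∃ u : GL (Fin 2) (ZMod 3), u.val.det = 1 ∧ Φ u = a := by
  obtain ⟨M, rfl⟩ := ha
  exact ⟨Matrix.SpecialLinearGroup.toGL M, M.2, rfl⟩

set_option maxHeartbeats 1000000 in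
/-- classification of involutions (and identity) in `AA`. -/
lemma order_two_classification {a : PGL2 kk} (ha : a ∈ AA) (h2 : a * a = 1) :
    a = 1 ∨ a = Φ I0 ∨ a = Φ J0 ∨ a = Φ K0 := by
  obtain ⟨u, hdet, rfl⟩ := AA_elt ha
  rw [← _root_.map_mul] at h2
  obtain ⟨c, hc⟩ := Phi_one_pullback h2
  rw [Units.val_mul] at hc
  have key : u.val = 1 ∨ u.val = -1 ∨ u.val = I0.val ∨ u.val = -I0.val ∨
      u.val = J0.val ∨ u.val = -J0.val ∨ u.val = K0.val ∨ u.val = -K0.val := by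
    revert hdet hc
    show u.val.det = 1 → u.val * u.val = c • 1 → _
    revert c
    generalize u.val = M
    revert M
    decide
  have neg_val : ∀ v : GL (Fin 2) (ZMod 3), u.val = -v.val → u = -v := by
    intro v hv
    exact Units.ext (by rw [hv, Units.val_neg])
  rcases key with h | h | h | h | h | h | h | h
  · exact Or.inl (Phi_eq_of_pm (Or.inl (Units.ext h)) |>.trans (map_one Φ))
  · exact Or.inl ((congrArg Φ (neg_val 1 h)).trans ((Phi_neg 1).trans (map_one Φ)))
  · exact Or.inr (Or.inl (congrArg Φ (Units.ext h)))
  · exact Or.inr (Or.inl (((congrArg Φ (neg_val I0 h))).trans (Phi_neg I0)))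
  · exact Or.inr (Or.inr (Or.inl (congrArg Φ (Units.ext h))))
  · exact Or.inr (Or.inr (Or.inl (((congrArg Φ (neg_val J0 h))).trans (Phi_neg J0))))
  · exact Or.inr (Or.inr (Or.inr (congrArg Φ (Units.ext h))))
  · exact Or.inr (Or.inr (Or.inr (((congrArg Φ (neg_val K0 h))).trans (Phi_neg K0))))

end ConjAux

section centaux
variable {FF : Type*} [Field FF]
set_option maxHeartbeats 1000000 in
theorem cent_aux (h3 : (3:FF) = 0) (y : Matrix (Fin 2) (Fin 2) FF) (hy : y.det ≠ 0) (ε δ : FF)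
    (hε : y * !![0,1;-1,0] = ε • (!![0,1;-1,0] * y))
    (hδ : y * !![1,1;1,-1] = δ • (!![1,1;1,-1] * y)) :
    (∃ c : FF, y = c • 1) ∨ (∃ c : FF, y = c • !![0,1;-1,0]) ∨
    (∃ c : FF, y = c • !![1,1;1,-1]) ∨ (∃ c : FF, y = c • !![1,-1;-1,-1]) := by
  have hdet : ∀ (M : Matrix (Fin 2) (Fin 2) FF) (e : FF), y * M = e • (M * y) → M.det = 1 →
      e = 1 ∨ e = -1 := by
    intro M e h hM
    have hd := congrArg Matrix.det h
    rw [Matrix.det_mul, Matrix.det_smul, Matrix.det_mul, hM, mul_one, one_mul,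
      Fintype.card_fin] at hd
    have hsq : e ^ 2 = 1 := mul_right_cancel₀ hy (by linear_combination -hd)
    rcases mul_eq_zero.mp (show (e - 1) * (e + 1) = 0 by linear_combination hsq) with h' | h'
    · exact Or.inl (by linear_combination h')
    · exact Or.inr (by linear_combination h')
  have hε' := hdet _ _ hε (by norm_num [Matrix.det_fin_two_of])
  have hδ' := hdet _ _ hδ (by rw [Matrix.det_fin_two_of]; linear_combination -h3)
  obtain ⟨a, b, c, d, rfl⟩ : ∃ a b c d, y = !![a,b;c,d] := ⟨_,_,_,_, Matrix.eta_fin_two y⟩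
  rw [Matrix.mul_fin_two, Matrix.mul_fin_two] at hε hδ
  have eI00 := congrFun (congrFun hε 0) 0
  have eI01 := congrFun (congrFun hε 0) 1
  have eJ00 := congrFun (congrFun hδ 0) 0
  have eJ01 := congrFun (congrFun hδ 0) 1
  have eJ10 := congrFun (congrFun hδ 1) 0
  simp at eI00 eI01 eJ00 eJ01 eJ10
  rcases hε' with rfl | rfl <;> rcases hδ' with rfl | rfl
  · left
    refine ⟨a, ?_⟩
    have hb : b = 0 := by linear_combination b*h3 - eJ00 + eI00
    have hc : c = 0 := by linear_combination -eI00 - hb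
    have hd2 : d = a := by linear_combination -eI01
    subst hb hc hd2
    ext i j; fin_cases i <;> fin_cases j <;> simp
  · right; left
    refine ⟨b, ?_⟩
    have ha : a = 0 := by linear_combination a*h3 - eJ00 - eI00
    have hd2 : d = 0 := by linear_combination ha - eI01
    have hc : c = -b := by linear_combination -eI00
    subst ha hd2 hc
    ext i j; fin_cases i <;> fin_cases j <;> simp
  · right; right; left
    refine ⟨a, ?_⟩
    have hc : c = b := by linear_combination eI00
    have hd2 : d = -a := by linear_combination eI01
    have hb : b = a := by linear_combination (b-a)*h3 + eJ01 + eI01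
    subst hc hd2 hb
    ext i j; fin_cases i <;> fin_cases j <;> simp <;> ring
  · right; right; right
    refine ⟨a, ?_⟩
    have hc : c = b := by linear_combination eI00
    have hd2 : d = -a := by linear_combination eI01
    have hb : b = -a := by linear_combination (a+b)*h3 - eJ00 - eI00 + 2*hc
    subst hc hd2 hb
    ext i j; fin_cases i <;> fin_cases j <;> simp <;> ring

end centaux

namespace ConjAux

lemma hIv : (Matrix.GeneralLinearGroup.map ff I0).val = !![(0:kk),1;-1,0] := by
  rw [Phi_val]; ext i j; fin_cases i <;> fin_cases j <;> simp [I0, Matrix.map_apply]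

lemma hJv : (Matrix.GeneralLinearGroup.map ff J0).val = !![(1:kk),1;1,-1] := by
  rw [Phi_val]; ext i j; fin_cases i <;> fin_cases j <;> simp [J0, Matrix.map_apply]

lemma hKv : (Matrix.GeneralLinearGroup.map ff K0).val = !![(1:kk),-1;-1,-1] := by
  rw [Phi_val]; ext i j; fin_cases i <;> fin_cases j <;> simp [K0, Matrix.map_apply]

lemma char3 : (3 : kk) = 0 := by
  haveI := charP_of_injective_ringHom ff_inj 3
  exact CharP.cast_eq_zero kk 3

lemma centralizer (y : GL (Fin 2) kk)
    (h1 : toPGL2 kk y * Φ I0 = Φ I0 * toPGL2 kk y)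
    (h2 : toPGL2 kk y * Φ J0 = Φ J0 * toPGL2 kk y) :
    toPGL2 kk y ∈ AA := by
  have h1' : toPGL2 kk (y * Matrix.GeneralLinearGroup.map ff I0)
      = toPGL2 kk (Matrix.GeneralLinearGroup.map ff I0 * y) := by
    rw [_root_.map_mul, _root_.map_mul]; exact h1
  have h2' : toPGL2 kk (y * Matrix.GeneralLinearGroup.map ff J0)
      = toPGL2 kk (Matrix.GeneralLinearGroup.map ff J0 * y) := by
    rw [_root_.map_mul, _root_.map_mul]; exact h2
  obtain ⟨ε, hε⟩ := (toPGL2_eq_iff _ _).mp h1'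
  obtain ⟨δ, hδ⟩ := (toPGL2_eq_iff _ _).mp h2'
  rw [Units.val_mul, Units.val_mul, hIv] at hε
  rw [Units.val_mul, Units.val_mul, hJv] at hδ
  have hy : y.val.det ≠ 0 := (Matrix.isUnits_det_units y).ne_zero
  rcases cent_aux char3 y.val hy ε δ hε hδ with ⟨c, hc⟩ | ⟨c, hc⟩ | ⟨c, hc⟩ | ⟨c, hc⟩
  · have : toPGL2 kk y = toPGL2 kk 1 := by
      rw [toPGL2_eq_iff]; exact ⟨c, by rw [hc, Units.val_one]⟩
    rw [this, _root_.map_one]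
    exact one_mem _
  · have : toPGL2 kk y = Φ I0 := by
      show _ = toPGL2 kk _
      rw [toPGL2_eq_iff]; exact ⟨c, by rw [hc, hIv]⟩
    rw [this]; exact mem_AA_I0
  · have : toPGL2 kk y = Φ J0 := by
      show _ = toPGL2 kk _
      rw [toPGL2_eq_iff]; exact ⟨c, by rw [hc, hJv]⟩
    rw [this]; exact mem_AA_J0
  · have : toPGL2 kk y = Φ K0 := by
      show _ = toPGL2 kk _
      rw [toPGL2_eq_iff]; exact ⟨c, by rw [hc, hKv]⟩
    rw [this]; exact mem_AA_K0

end ConjAux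

namespace ConjAux

lemma Phi_conj {P T T' : GL (Fin 2) (ZMod 3)}
    (h : P * T = T' * P ∨ P * T = -(T' * P)) :
    Φ P * Φ T * (Φ P)⁻¹ = Φ T' := by
  have h' : Φ (P * T) = Φ (T' * P) := Phi_eq_of_pm h
  rw [_root_.map_mul, _root_.map_mul] at h'
  rw [h']
  group

lemma PhiI0_ne_one : Φ I0 ≠ 1 := by
  intro h
  obtain ⟨c, hc⟩ := Phi_one_pullback h
  exact (by decide : ∀ c : ZMod 3, I0.val ≠ c • 1) c hc

lemma PhiJ0_ne_one : Φ J0 ≠ 1 := by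
  intro h
  obtain ⟨c, hc⟩ := Phi_one_pullback h
  exact (by decide : ∀ c : ZMod 3, J0.val ≠ c • 1) c hc

lemma Phi_ne_of_decide {u v : GL (Fin 2) (ZMod 3)} (h : ∀ c : ZMod 3, u.val ≠ c • v.val) :
    Φ u ≠ Φ v := by
  intro he
  obtain ⟨c, hc⟩ := Phi_pullback he
  exact h c hc

lemma PhiI0_ne_PhiJ0 : Φ I0 ≠ Φ J0 := Phi_ne_of_decide (by decide)
lemma PhiI0_ne_PhiK0 : Φ I0 ≠ Φ K0 := Phi_ne_of_decide (by decide)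
lemma PhiJ0_ne_PhiK0 : Φ J0 ≠ Φ K0 := Phi_ne_of_decide (by decide)

lemma PhiI0_sq : Φ I0 * Φ I0 = 1 := by
  rw [← _root_.map_mul]
  exact (Phi_eq_of_pm (Or.inr (by decide : I0 * I0 = -(1 : GL (Fin 2) (ZMod 3))))).trans
    (map_one Φ)

lemma PhiJ0_sq : Φ J0 * Φ J0 = 1 := by
  rw [← _root_.map_mul]
  exact (Phi_eq_of_pm (Or.inr (by decide : J0 * J0 = -(1 : GL (Fin 2) (ZMod 3))))).trans
    (map_one Φ)

/-- conjugators -/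
def P_IK : GL (Fin 2) (ZMod 3) := ⟨!![0,1;1,0], !![0,1;1,0], by decide, by decide⟩
def P_JI : GL (Fin 2) (ZMod 3) := ⟨!![0,1;1,-1], !![1,1;1,0], by decide, by decide⟩
def P_JK : GL (Fin 2) (ZMod 3) := ⟨!![0,1;-1,-1], !![-1,-1;1,0], by decide, by decide⟩
def P_KI : GL (Fin 2) (ZMod 3) := ⟨!![0,1;-1,1], !![1,-1;1,0], by decide, by decide⟩
def P_KJ : GL (Fin 2) (ZMod 3) := ⟨!![0,1;1,1], !![-1,1;1,0], by decide, by decide⟩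

lemma finish_case (x : PGL2 kk) (P T1 T2 : GL (Fin 2) (ZMod 3))
    (hc1 : P * I0 = T1 * P ∨ P * I0 = -(T1 * P))
    (hc2 : P * J0 = T2 * P ∨ P * J0 = -(T2 * P))
    (h1 : x * Φ I0 * x⁻¹ = Φ T1) (h2 : x * Φ J0 * x⁻¹ = Φ T2) : x ∈ SS := by
  have hs1 : Φ P * Φ I0 * (Φ P)⁻¹ = Φ T1 := Phi_conj hc1
  have hs2 : Φ P * Φ J0 * (Φ P)⁻¹ = Φ T2 := Phi_conj hc2
  have hx1 : x * Φ I0 = Φ T1 * x := by rw [← h1]; group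
  have hx2 : x * Φ J0 = Φ T2 * x := by rw [← h2]; group
  have hp1 : (Φ P)⁻¹ * Φ T1 = Φ I0 * (Φ P)⁻¹ := by rw [← hs1]; group
  have hp2 : (Φ P)⁻¹ * Φ T2 = Φ J0 * (Φ P)⁻¹ := by rw [← hs2]; group
  have hy1 : ((Φ P)⁻¹ * x) * Φ I0 = Φ I0 * ((Φ P)⁻¹ * x) := by
    calc ((Φ P)⁻¹ * x) * Φ I0 = (Φ P)⁻¹ * (x * Φ I0) := by group
      _ = (Φ P)⁻¹ * (Φ T1 * x) := by rw [hx1]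
      _ = ((Φ P)⁻¹ * Φ T1) * x := by group
      _ = (Φ I0 * (Φ P)⁻¹) * x := by rw [hp1]
      _ = Φ I0 * ((Φ P)⁻¹ * x) := by group
  have hy2 : ((Φ P)⁻¹ * x) * Φ J0 = Φ J0 * ((Φ P)⁻¹ * x) := by
    calc ((Φ P)⁻¹ * x) * Φ J0 = (Φ P)⁻¹ * (x * Φ J0) := by group
      _ = (Φ P)⁻¹ * (Φ T2 * x) := by rw [hx2]
      _ = ((Φ P)⁻¹ * Φ T2) * x := by group
      _ = (Φ J0 * (Φ P)⁻¹) * x := by rw [hp2]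
      _ = Φ J0 * ((Φ P)⁻¹ * x) := by group
  obtain ⟨Y, hY⟩ := QuotientGroup.mk'_surjective (Subgroup.center (GL (Fin 2) kk))
    ((Φ P)⁻¹ * x)
  have hY' : toPGL2 kk Y = (Φ P)⁻¹ * x := hY
  have hmem := centralizer Y (by rw [hY']; exact hy1) (by rw [hY']; exact hy2)
  rw [hY'] at hmem
  have := mul_mem (mem_SS P) (AA_le_SS hmem)
  simpa using this

lemma normalizer_le (x : PGL2 kk) (hx : ∀ a ∈ AA, x * a * x⁻¹ ∈ AA) : x ∈ SS := by
  have hconj_ne : ∀ u v : PGL2 kk, u ≠ v → x * u * x⁻¹ ≠ x * v * x⁻¹ := by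
    intro u v huv he
    apply huv
    have : u = x⁻¹ * (x * u * x⁻¹) * x := by group
    rw [this, he]; group
  have hsq : ∀ t : PGL2 kk, t * t = 1 → (x * t * x⁻¹) * (x * t * x⁻¹) = 1 := by
    intro t ht
    rw [show (x * t * x⁻¹) * (x * t * x⁻¹) = x * (t * t) * x⁻¹ by group, ht]
    group
  have hne1 : ∀ t : PGL2 kk, t ≠ 1 → x * t * x⁻¹ ≠ 1 := by
    intro t ht he
    apply ht
    have : t = x⁻¹ * (x * t * x⁻¹) * x := by group
    rw [this, he]; group
  have ht1 := order_two_classification (hx _ mem_AA_I0) (hsq _ PhiI0_sq)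
  have ht2 := order_two_classification (hx _ mem_AA_J0) (hsq _ PhiJ0_sq)
  rcases ht1 with h1 | h1 | h1 | h1
  · exact absurd h1 (hne1 _ PhiI0_ne_one)
  -- t1 = Φ I0
  · rcases ht2 with h2 | h2 | h2 | h2
    · exact absurd h2 (hne1 _ PhiJ0_ne_one)
    · exact absurd (h1.trans h2.symm) (hconj_ne _ _ PhiI0_ne_PhiJ0)
    · exact finish_case x 1 I0 J0 (Or.inl (by decide)) (Or.inl (by decide)) h1 h2
    · exact finish_case x P_IK I0 K0 (by decide) (by decide) h1 h2
  -- t1 = Φ J0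
  · rcases ht2 with h2 | h2 | h2 | h2
    · exact absurd h2 (hne1 _ PhiJ0_ne_one)
    · exact finish_case x P_JI J0 I0 (by decide) (by decide) h1 h2
    · exact absurd (h1.trans h2.symm) (hconj_ne _ _ PhiI0_ne_PhiJ0)
    · exact finish_case x P_JK J0 K0 (by decide) (by decide) h1 h2
  -- t1 = Φ K0
  · rcases ht2 with h2 | h2 | h2 | h2
    · exact absurd h2 (hne1 _ PhiJ0_ne_one)
    · exact finish_case x P_KI K0 I0 (by decide) (by decide) h1 h2
    · exact finish_case x P_KJ K0 J0 (by decide) (by decide) h1 h2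
    · exact absurd (h1.trans h2.symm) (hconj_ne _ _ PhiI0_ne_PhiJ0)

end ConjAux

namespace ConjAux

lemma coset (x : PGL2 kk) (hx : x ∈ SS) : x ∈ AA ∨ ∃ a ∈ AA, x = Φ D0 * a := by
  obtain ⟨P, hP⟩ := hx
  have hP' : Φ P = x := hP
  subst hP'
  have hdet0 : P.val.det ≠ 0 := by
    intro h
    have h1 := congrArg Matrix.det (P.mul_inv)
    rw [Matrix.det_mul, h, zero_mul, Matrix.det_one] at h1
    exact zero_ne_one h1
  rcases (by decide : ∀ c : ZMod 3, c = 0 ∨ c = 1 ∨ c = -1) P.val.det with h | h | h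
  · exact absurd h hdet0
  · exact Or.inl (mem_AA_of_det h)
  · refine Or.inr ⟨Φ (D0 * P), mem_AA_of_det ?_, ?_⟩
    · rw [Units.val_mul, Matrix.det_mul, h]
      decide
    · rw [← _root_.map_mul, ← mul_assoc, (by decide : D0 * D0 = 1), one_mul]

end ConjAux

open ConjAux

/-- If `G ≤ PGL₂(k)` (`k` an algebraic closure of `𝔽₃`) has a normal subgroup `N` with
`G/N` abelian, and `N` is conjugate to `PSL₂(𝔽₃)`, then `G` is conjugate to `PSL₂(𝔽₃)`
or to `PGL₂(𝔽₃)`. -/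
theorem conj_psl_or_pgl_three_of_normal
    (G : Subgroup (PGL2 (AlgebraicClosure (ZMod 3)))) (N : Subgroup ↥G) [N.Normal]
    (hab : ∀ x y : ↥G ⧸ N, x * y = y * x)
    (hN : IsConjSubgroup (N.map G.subtype)
      (PSLsub (algebraMap (ZMod 3) (AlgebraicClosure (ZMod 3))))) :
    IsConjSubgroup G (PSLsub (algebraMap (ZMod 3) (AlgebraicClosure (ZMod 3)))) ∨
      IsConjSubgroup G (PGLsub (algebraMap (ZMod 3) (AlgebraicClosure (ZMod 3)))) := by
  obtain ⟨g, hg⟩ := hN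
  have hg' : Subgroup.map (MulAut.conj g).toMonoidHom (N.map G.subtype) = AA := hg
  have hNnorm : ∀ x ∈ G, ∀ n ∈ N.map G.subtype, x * n * x⁻¹ ∈ N.map G.subtype := by
    rintro x hx n ⟨m, hm, rfl⟩
    exact ⟨⟨x, hx⟩ * m * ⟨x, hx⟩⁻¹, Subgroup.Normal.conj_mem ‹N.Normal› m hm ⟨x, hx⟩, rfl⟩
  have hsub : AA ≤ Subgroup.map (MulAut.conj g).toMonoidHom G := by
    rw [← hg']
    exact Subgroup.map_mono (Subgroup.map_subtype_le N)
  have hnorm : ∀ x ∈ Subgroup.map (MulAut.conj g).toMonoidHom G,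
      ∀ a ∈ AA, x * a * x⁻¹ ∈ AA := by
    rintro x ⟨x0, hx0, rfl⟩ a ha
    rw [← hg'] at ha ⊢
    obtain ⟨n, hn, rfl⟩ := ha
    refine ⟨x0 * n * x0⁻¹, hNnorm x0 hx0 n hn, ?_⟩
    simp [mul_assoc]
  have hG'S : Subgroup.map (MulAut.conj g).toMonoidHom G ≤ SS := fun x hx =>
    normalizer_le x (hnorm x hx)
  by_cases hle : Subgroup.map (MulAut.conj g).toMonoidHom G ≤ AA
  · exact Or.inl ⟨g, le_antisymm hle hsub⟩
  · refine Or.inr ⟨g, le_antisymm hG'S ?_⟩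
    obtain ⟨x, hxG, hxA⟩ := SetLike.not_le_iff_exists.mp hle
    rcases coset x (hG'S hxG) with h | ⟨a, ha, rfl⟩
    · exact absurd h hxA
    · have hδ : Φ D0 ∈ Subgroup.map (MulAut.conj g).toMonoidHom G := by
        have he : Φ D0 = (Φ D0 * a) * a⁻¹ := by group
        rw [he]
        exact mul_mem hxG (inv_mem (hsub ha))
      intro s hs
      rcases coset s hs with h | ⟨b, hb, rfl⟩
      · exact hsub h
      · exact mul_mem hδ (hsub hb)
end
end

section
/- Let k be an algebraic closure of F_5, let G be a subgroup of PGL_2(k), and let N be a normal subgroup of G such that the quotient G/N is abelian. Then N is conjugate in PGL_2(k) to PSL_2(F_5) or to PGL_2(F_5) if and only if G is conjugate in PGL_2(k) to PSL_2(F_5) or to PGL_2(F_5). -/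
open Matrix

noncomputable section

set_option maxRecDepth 10000
set_option linter.unnecessarySimpa false

open scoped commutatorElement

instance : Fact (Even (Fintype.card (Fin 2))) := ⟨by simp⟩
instance : DecidableEq (Matrix.SpecialLinearGroup (Fin 2) (ZMod 5)) :=
  fun a b => decidable_of_iff (a.1 = b.1) Subtype.ext_iff.symm

local notation "SL5" => Matrix.SpecialLinearGroup (Fin 2) (ZMod 5)
local notation "M5" => Matrix (Fin 2) (Fin 2) (ZMod 5)
local notation "E" => Matrix.single (α := ZMod 5)

section center
variable {k : Type*} [Field k]

lemma scalar_smul_one (c : k) : Matrix.scalar (Fin 2) c = c • (1 : Matrix (Fin 2) (Fin 2) k) := by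
  ext i j
  by_cases h : i = j <;> simp [Matrix.scalar_apply, Matrix.one_apply, h]

lemma mem_center_GL2_iff (z : GL (Fin 2) k) :
    z ∈ Subgroup.center (GL (Fin 2) k) ↔
    ∃ c : k, (z : Matrix (Fin 2) (Fin 2) k) = c • (1 : Matrix (Fin 2) (Fin 2) k) := by
  constructor
  · intro hz
    have key : ∀ i j : Fin 2, i ≠ j →
        Commute (Matrix.single i j 1) (z : Matrix (Fin 2) (Fin 2) k) := by
      intro i j hij
      have hsq : Matrix.single i j (1:k) * Matrix.single i j 1 = 0 :=
        Matrix.single_mul_single_of_ne 1 i j i hij.symm 1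
      have hu : (1 + Matrix.single i j (1:k)) * (1 - Matrix.single i j (1:k)) = 1 := by
        rw [mul_sub, add_mul, add_mul, hsq]; simp only [one_mul, mul_one]; abel
      have hu' : (1 - Matrix.single i j (1:k)) * (1 + Matrix.single i j (1:k)) = 1 := by
        rw [sub_mul, mul_add, mul_add, hsq]; simp only [one_mul, mul_one]; abel
      set U : GL (Fin 2) k := ⟨1 + Matrix.single i j 1, 1 - Matrix.single i j 1, hu, hu'⟩
      have hcomm := (Subgroup.mem_center_iff.mp hz U)
      have h2 : (1 + Matrix.single i j (1:k)) * (z : Matrix (Fin 2) (Fin 2) k)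
          = (z : Matrix (Fin 2) (Fin 2) k) * (1 + Matrix.single i j 1) :=
        congrArg Units.val hcomm
      rw [add_mul, mul_add, one_mul, mul_one] at h2
      unfold Commute SemiconjBy
      linear_combination (norm := abel) h2
    obtain ⟨c, hc⟩ := Matrix.mem_range_scalar_of_commute_single (fun i j h => key i j h)
    exact ⟨c, by rw [← hc, scalar_smul_one]⟩
  · rintro ⟨c, hc⟩
    rw [Subgroup.mem_center_iff]
    intro g
    ext : 1
    push_cast
    rw [hc]
    simp [Matrix.mul_smul, Matrix.smul_mul]

lemma toPGL2_eq_one_iff (z : GL (Fin 2) k) :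
    toPGL2 k z = 1 ↔ ∃ c : k, (z : Matrix (Fin 2) (Fin 2) k) = c • 1 := by
  rw [toPGL2, QuotientGroup.mk'_apply, QuotientGroup.eq_one_iff, mem_center_GL2_iff]

lemma toPGL2_eq_iff (x y : GL (Fin 2) k) :
    toPGL2 k x = toPGL2 k y ↔
      ∃ c : k, (y : Matrix (Fin 2) (Fin 2) k) = c • (x : Matrix (Fin 2) (Fin 2) k) := by
  constructor
  · intro h
    have h2 : toPGL2 k (x⁻¹ * y) = 1 := by
      rw [_root_.map_mul, ← h, map_inv, inv_mul_cancel]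
    obtain ⟨c, hc⟩ := (toPGL2_eq_one_iff _).1 h2
    refine ⟨c, ?_⟩
    have : (x : Matrix (Fin 2) (Fin 2) k) * ((x⁻¹ * y : GL (Fin 2) k) : Matrix (Fin 2) (Fin 2) k)
        = (y : Matrix (Fin 2) (Fin 2) k) := by
      rw [← Units.val_mul, ← mul_assoc, mul_inv_cancel, one_mul]
    rw [← this, hc]
    simp [Matrix.mul_smul]
  · rintro ⟨c, hc⟩
    have h2 : ((x⁻¹ * y : GL (Fin 2) k) : Matrix (Fin 2) (Fin 2) k) = c • 1 := by
      rw [Units.val_mul, hc, Matrix.mul_smul, ← Units.val_mul, inv_mul_cancel, Units.val_one]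
    have h3 : toPGL2 k (x⁻¹ * y) = 1 := (toPGL2_eq_one_iff _).2 ⟨c, h2⟩
    have := congrArg (toPGL2 k x * ·) h3
    simpa [← _root_.map_mul, ← mul_assoc] using this.symm

end center

def Umat (x : ZMod 5) : SL5 := ⟨!![1, x; 0, 1], by simp [Matrix.det_fin_two_of]⟩
def Lmat (x : ZMod 5) : SL5 := ⟨!![1, 0; x, 1], by simp [Matrix.det_fin_two_of]⟩
def Dmat : SL5 := ⟨!![2, 0; 0, 3], by simp [Matrix.det_fin_two_of]; decide⟩

lemma U_comm : ∀ x : ZMod 5, Dmat * Umat (2*x) = Umat x * Umat (2*x) * Dmat := by decide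
lemma L_comm : ∀ x : ZMod 5, Dmat * Lmat (2*x) = Lmat x * Lmat (2*x) * Dmat := by decide

lemma U_eq_commutator (x : ZMod 5) : Umat x = ⁅Dmat, Umat (2*x)⁆ := by
  rw [commutatorElement_def]
  have h := U_comm x
  rw [h]; group

lemma L_eq_commutator (x : ZMod 5) : Lmat x = ⁅Dmat, Lmat (2*x)⁆ := by
  rw [commutatorElement_def]
  have h := L_comm x
  rw [h]; group

lemma UL_decomp : ∀ M : SL5,
    (M.1 1 0 ≠ 0 → M = Umat ((M.1 0 0 - 1) * (M.1 1 0 * M.1 1 0 * M.1 1 0)) * Lmat (M.1 1 0) *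
      Umat ((M.1 1 1 - 1) * (M.1 1 0 * M.1 1 0 * M.1 1 0))) ∧
    (M.1 1 0 = 0 → (M * Lmat 1).1 1 0 ≠ 0) := by decide

lemma sl5_perfect : (⁅(⊤ : Subgroup SL5), (⊤ : Subgroup SL5)⁆ : Subgroup SL5) = ⊤ := by
  rw [eq_top_iff]
  intro M _
  have hU : ∀ x, Umat x ∈ (⁅(⊤ : Subgroup SL5), (⊤ : Subgroup SL5)⁆ : Subgroup SL5) := fun x =>
    U_eq_commutator x ▸ Subgroup.commutator_mem_commutator (Subgroup.mem_top _) (Subgroup.mem_top _)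
  have hL : ∀ x, Lmat x ∈ (⁅(⊤ : Subgroup SL5), (⊤ : Subgroup SL5)⁆ : Subgroup SL5) := fun x =>
    L_eq_commutator x ▸ Subgroup.commutator_mem_commutator (Subgroup.mem_top _) (Subgroup.mem_top _)
  have main : ∀ M : SL5, M.1 1 0 ≠ 0 →
      M ∈ (⁅(⊤ : Subgroup SL5), (⊤ : Subgroup SL5)⁆ : Subgroup SL5) := by
    intro M hc
    rw [(UL_decomp M).1 hc]
    exact Subgroup.mul_mem _ (Subgroup.mul_mem _ (hU _) (hL _)) (hU _)
  by_cases hc : M.1 1 0 = 0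
  · have h1 : M * Lmat 1 ∈ (⁅(⊤ : Subgroup SL5), (⊤ : Subgroup SL5)⁆ : Subgroup SL5) :=
      main _ ((UL_decomp M).2 hc)
    have : M = (M * Lmat 1) * (Lmat 1)⁻¹ := by group
    rw [this]
    exact Subgroup.mul_mem _ h1 (Subgroup.inv_mem _ (hL 1))
  · exact main M hc

def Dmat' : SL5 := ⟨!![3, 0; 0, 2], by simp [Matrix.det_fin_two_of]; decide⟩

lemma mini_skolem_noether (φ : M5 → M5)
    (hmul : ∀ A B, φ (A * B) = φ A * φ B)
    (hadd : ∀ A B, φ (A + B) = φ A + φ B)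
    (hsmul : ∀ (x : ZMod 5) (A : M5), φ (x • A) = x • φ A)
    (hinj : Function.Injective φ) :
    ∃ h : M5, IsUnit h.det ∧ ∀ A : M5, φ A * h = h * A := by
  have hzero : φ 0 = 0 := by
    have h := hadd 0 0
    rw [add_zero] at h
    exact (add_eq_left.mp h.symm)
  -- the idempotent e
  set e := φ (E 0 0 1) with he
  have hee : e * e = e := by
    rw [← hmul, Matrix.single_mul_single_same]; norm_num [he]
  have hene : e ≠ 0 := by
    intro h0
    have h1 : φ (E 0 0 1) = φ 0 := by rw [← he, h0, hzero]
    have h2 := congrFun (congrFun (hinj h1) 0) 0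
    simp at h2
  -- find v with e *ᵥ v = v, v ≠ 0
  obtain ⟨w, hw⟩ : ∃ w, e *ᵥ w ≠ 0 := by
    by_contra hc
    push_neg at hc
    apply hene
    ext i j
    have h2 := congrFun (hc (Pi.single j 1)) i
    simp only [Matrix.mulVec_single, mul_one, Pi.zero_apply] at h2
    simpa using h2
  set v := e *ᵥ w with hv
  have hev : e *ᵥ v = v := by rw [hv, Matrix.mulVec_mulVec, hee]
  have hvne : v ≠ 0 := hw
  set v' := φ (E 1 0 1) *ᵥ v with hv'
  -- the eight identities
  have prodE : ∀ (i j i' j' : Fin 2), E i j 1 * E i' j' 1 = if j = i' then E i j' 1 else 0 := by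
    intro i j i' j'
    by_cases h : j = i'
    · subst h; rw [Matrix.single_mul_single_same, one_mul, if_pos rfl]
    · rw [Matrix.single_mul_single_of_ne 1 i j i' h, if_neg h]
  have key : ∀ (i j q : Fin 2), φ (E i j 1) *ᵥ (![v, v'] q) = if q = j then ![v, v'] i else 0 := by
    intro i j q
    have base : ∀ i' j' : Fin 2, φ (E i' j' 1) *ᵥ v = if (0 : Fin 2) = j' then ![v, v'] i' else 0 := by
      intro i' j'
      fin_cases i' <;> fin_cases j'
      · simpa using hev
      · rw [if_neg (by decide), ← hev, Matrix.mulVec_mulVec, ← hmul, prodE,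
          if_neg (by decide), hzero]
        simp
      · simpa using hv'.symm
      · rw [if_neg (by decide), ← hev, Matrix.mulVec_mulVec, ← hmul, prodE,
          if_neg (by decide), hzero]
        simp
    have base' : ∀ i' j' : Fin 2, φ (E i' j' 1) *ᵥ v' = if (1 : Fin 2) = j' then ![v, v'] i' else 0 := by
      intro i' j'
      rw [hv', Matrix.mulVec_mulVec, ← hmul, prodE]
      fin_cases j'
      · norm_num [hzero]
      · norm_num
        simpa [hv'] using base i' 0
    fin_cases q
    · simpa using base i j
    · simpa using base' i j
  -- the matrix h
  set h : M5 := Matrix.of (fun p q => ![v, v'] q p) with hh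
  have hcol : ∀ q : Fin 2, (fun r => h r q) = ![v, v'] q := by intro q; rfl
  have hdet : h.det ≠ 0 := by
    intro h0
    obtain ⟨x, hx0, hx⟩ := (Matrix.exists_mulVec_eq_zero_iff (A := ZMod 5)).2 h0
    have hxv : x 0 • v + x 1 • v' = 0 := by
      rw [← hx]
      ext p
      simp [hh, Matrix.mulVec, dotProduct, Fin.sum_univ_two, mul_comm]
    by_cases h1 : x 1 = 0
    · have h00 : x 0 ≠ 0 := by
        intro h00; apply hx0; ext r; fin_cases r <;> simp [h00, h1]
      rw [h1, zero_smul, add_zero] at hxv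
      exact hvne (by rwa [smul_eq_zero_iff_right h00] at hxv)
    · -- apply φ(E 0 1) *ᵥ
      have happ := congrArg (fun y => φ (E 0 1 1) *ᵥ y) hxv
      simp only [Matrix.mulVec_add, Matrix.mulVec_smul, Matrix.mulVec_zero] at happ
      have k1 : φ (E 0 1 1) *ᵥ v = 0 := by simpa using key 0 1 0
      have k2 : φ (E 0 1 1) *ᵥ v' = v := by simpa using key 0 1 1
      rw [k1, k2, smul_zero, zero_add] at happ
      exact hvne (by rwa [smul_eq_zero_iff_right h1] at happ)
  refine ⟨h, isUnit_iff_ne_zero.2 hdet, ?_⟩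
  -- first on basis matrices
  have hbasis : ∀ i j : Fin 2, φ (E i j 1) * h = h * E i j 1 := by
    intro i j
    ext p q
    have lhs : (φ (E i j 1) * h) p q = (φ (E i j 1) *ᵥ ![v, v'] q) p := by
      simp [Matrix.mul_apply, Matrix.mulVec, dotProduct, hh]
    have rhs : (h * E i j 1) p q = if q = j then ![v, v'] i p else 0 := by
      simp only [Matrix.mul_apply, Matrix.single, hh]
      fin_cases q <;> fin_cases j <;> fin_cases i <;>
        simp [Fin.sum_univ_two, Matrix.of_apply]
    rw [lhs, rhs, key]
    by_cases hqj : q = j <;> simp [hqj]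
  -- now general A
  intro A
  have hA : A = A 0 0 • E 0 0 1 + A 0 1 • E 0 1 1 + A 1 0 • E 1 0 1 + A 1 1 • E 1 1 1 := by
    ext p q
    fin_cases p <;> fin_cases q <;> simp [Matrix.single]
  rw [hA, hadd, hadd, hadd, hsmul, hsmul, hsmul, hsmul]
  simp only [add_mul, mul_add, smul_mul_assoc, mul_smul_comm, hbasis]

section main
variable {k : Type*} [Field k] (f : ZMod 5 →+* k)

lemma map_smul5 (x : ZMod 5) (M : M5) : (x • M).map f = f x • M.map f := by
  ext i j; simp [Matrix.map_apply]

lemma map_add5 (M N : M5) : (M + N).map f = M.map f + N.map f := by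
  ext i j; simp [Matrix.map_apply]

lemma map_neg5 (M : M5) : (-M).map f = -(M.map f) := by
  ext i j; simp [Matrix.map_apply]

lemma mapE (i j : Fin 2) :
    (Matrix.single i j (1 : ZMod 5)).map f = Matrix.single i j (1 : k) := by
  ext p q; simp [Matrix.single, Matrix.map_apply, apply_ite f]

lemma val_mapGL (A : GL (Fin 2) (ZMod 5)) :
    ((Matrix.GeneralLinearGroup.map f A : GL (Fin 2) k) : Matrix (Fin 2) (Fin 2) k)
      = (A : M5).map f := rfl

lemma val_toGL (S : SL5) :
    ((Matrix.SpecialLinearGroup.toGL S : GL (Fin 2) (ZMod 5)) : M5) = (S : M5) := rfl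

-- S1
lemma conj_PSL_matrix (g : GL (Fin 2) k)
    (hg : ∀ S : SL5, toPGL2 k
      (g * Matrix.GeneralLinearGroup.map f (Matrix.SpecialLinearGroup.toGL S) * g⁻¹)
        ∈ PSLsub f) (S : SL5) :
    ∃ T : SL5, (g : Matrix (Fin 2) (Fin 2) k) * ((S : M5).map f)
        * ((g⁻¹ : GL (Fin 2) k) : Matrix (Fin 2) (Fin 2) k) = (T : M5).map f := by
  obtain ⟨S', hS'⟩ := hg S
  rw [MonoidHom.comp_apply, MonoidHom.comp_apply] at hS'
  obtain ⟨c, hc⟩ := (toPGL2_eq_iff _ _).1 hS'.symm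
  rw [Units.val_mul, Units.val_mul, val_mapGL, val_toGL, val_mapGL, val_toGL] at hc
  -- determinant computation
  have hdetg : ((g : Matrix (Fin 2) (Fin 2) k)).det * ((g⁻¹ : GL (Fin 2) k) : Matrix (Fin 2) (Fin 2) k).det = 1 := by
    rw [← Matrix.det_mul, ← Units.val_mul, mul_inv_cancel, Units.val_one, Matrix.det_one]
  have hdetS : ((S : M5).map ⇑f).det = 1 := by
    rw [← RingHom.mapMatrix_apply, ← RingHom.map_det, S.2, _root_.map_one]
  have hdetS' : ((S' : M5).map ⇑f).det = 1 := by
    rw [← RingHom.mapMatrix_apply, ← RingHom.map_det, S'.2, _root_.map_one]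
  have hd := congrArg Matrix.det hc
  rw [Matrix.det_smul, Matrix.det_mul, Matrix.det_mul, hdetS, hdetS'] at hd
  simp only [Fintype.card_fin] at hd
  have hc2 : c * c = 1 := by linear_combination -hd - c ^ 2 * hdetg
  rcases mul_self_eq_one_iff.mp hc2 with h1 | h1
  · rw [h1, one_smul] at hc
    exact ⟨S', hc.symm⟩
  · refine ⟨-S', ?_⟩
    rw [Matrix.SpecialLinearGroup.coe_neg, map_neg5, hc, h1]
    simp

lemma span5 (A : M5) :
    A = A 0 1 • ((Umat 1) : M5) + A 1 0 • ((Lmat 1) : M5) + A 1 1 • (Dmat : M5)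
      + A 0 0 • (Dmat' : M5)
      + (-(2 : ZMod 5) * A 0 0 - A 0 1 - A 1 0 - 2 * A 1 1) • (1 : M5) := by
  ext i j
  fin_cases i <;> fin_cases j <;>
    simp [Umat, Lmat, Dmat, Dmat', Matrix.one_apply] <;> ring

lemma conj_all_matrix (g : GL (Fin 2) k)
    (hconj : ∀ S : SL5, ∃ T : SL5, (g : Matrix (Fin 2) (Fin 2) k) * ((S : M5).map f)
        * ((g⁻¹ : GL (Fin 2) k) : Matrix (Fin 2) (Fin 2) k) = (T : M5).map f)
    (A : M5) :
    ∃ B : M5, (g : Matrix (Fin 2) (Fin 2) k) * (A.map f)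
        * ((g⁻¹ : GL (Fin 2) k) : Matrix (Fin 2) (Fin 2) k) = B.map f := by
  obtain ⟨Tu, hTu⟩ := hconj (Umat 1)
  obtain ⟨Tl, hTl⟩ := hconj (Lmat 1)
  obtain ⟨Td, hTd⟩ := hconj Dmat
  obtain ⟨Td', hTd'⟩ := hconj Dmat'
  obtain ⟨T1, hT1⟩ := hconj 1
  rw [show ((1 : SL5) : M5) = (1 : M5) from rfl,
    Matrix.map_one ⇑f (map_zero f) (_root_.map_one f)] at hT1
  refine ⟨A 0 1 • (Tu : M5) + A 1 0 • (Tl : M5) + A 1 1 • (Td : M5) + A 0 0 • (Td' : M5)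
      + (-(2 : ZMod 5) * A 0 0 - A 0 1 - A 1 0 - 2 * A 1 1) • (T1 : M5), ?_⟩
  conv_lhs => rw [show A.map ⇑f = (A 0 1 • ((Umat 1) : M5) + A 1 0 • ((Lmat 1) : M5)
      + A 1 1 • (Dmat : M5) + A 0 0 • (Dmat' : M5)
      + (-(2 : ZMod 5) * A 0 0 - A 0 1 - A 1 0 - 2 * A 1 1) • (1 : M5)).map ⇑f from by
        rw [← span5 A]]
  rw [map_add5, map_add5, map_add5, map_add5, map_smul5, map_smul5, map_smul5, map_smul5,
    map_smul5, Matrix.map_one ⇑f (map_zero f) (_root_.map_one f),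
    map_add5, map_add5, map_add5, map_add5, map_smul5, map_smul5, map_smul5, map_smul5,
    map_smul5]
  simp only [Matrix.add_mul, Matrix.mul_add, Matrix.smul_mul, Matrix.mul_smul]
  rw [hTu, hTl, hTd, hTd', hT1]

lemma mem_PGL_of_normalizes (hf : Function.Injective ⇑f) (g : GL (Fin 2) k)
    (hg : ∀ S : SL5, toPGL2 k
      (g * Matrix.GeneralLinearGroup.map f (Matrix.SpecialLinearGroup.toGL S) * g⁻¹)
        ∈ PSLsub f) :
    toPGL2 k g ∈ PGLsub f := by
  have hall := conj_all_matrix f g (conj_PSL_matrix f g hg)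
  set gm : Matrix (Fin 2) (Fin 2) k := (g : Matrix (Fin 2) (Fin 2) k) with hgm
  set gi : Matrix (Fin 2) (Fin 2) k := ((g⁻¹ : GL (Fin 2) k) : Matrix (Fin 2) (Fin 2) k) with hgi
  have hig1 : gi * gm = 1 := by
    rw [hgm, hgi, ← Units.val_mul, inv_mul_cancel, Units.val_one]
  have hgi1 : gm * gi = 1 := by
    rw [hgm, hgi, ← Units.val_mul, mul_inv_cancel, Units.val_one]
  have hmapinj : Function.Injective (fun M : M5 => M.map ⇑f) := by
    intro M N h
    ext i j
    have h' : M.map ⇑f = N.map ⇑f := h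
    have h2 : (M.map ⇑f) i j = (N.map ⇑f) i j := by rw [h']
    rw [Matrix.map_apply, Matrix.map_apply] at h2
    exact hf h2
  have hcancel : ∀ X Y : Matrix (Fin 2) (Fin 2) k, gm * X * gi = gm * Y * gi → X = Y := by
    intro X Y h
    have h2 := congrArg (fun M => gi * M * gm) h
    simp only [mul_assoc] at h2
    rw [← mul_assoc gi gm, hig1, one_mul, ← mul_assoc gi gm, hig1, one_mul] at h2
    simpa using h2
  -- the ring endomorphism φ
  set φ : M5 → M5 := fun A => Classical.choose (hall A) with hφdef
  have hφ : ∀ A : M5, (φ A).map ⇑f = gm * A.map ⇑f * gi := fun A =>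
    (Classical.choose_spec (hall A)).symm
  have hmul : ∀ A B : M5, φ (A * B) = φ A * φ B := by
    intro A B
    apply hmapinj
    show (φ (A * B)).map ⇑f = (φ A * φ B).map ⇑f
    rw [Matrix.map_mul, hφ, hφ, hφ, Matrix.map_mul]
    rw [show gm * A.map ⇑f * gi * (gm * B.map ⇑f * gi)
        = gm * (A.map ⇑f * ((gi * gm) * B.map ⇑f)) * gi from by simp only [mul_assoc], hig1,
      one_mul]
  have hadd : ∀ A B : M5, φ (A + B) = φ A + φ B := by
    intro A B
    apply hmapinj
    show (φ (A + B)).map ⇑f = (φ A + φ B).map ⇑f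
    rw [map_add5, hφ, hφ, hφ, map_add5, Matrix.mul_add, Matrix.add_mul]
  have hsmul : ∀ (x : ZMod 5) (A : M5), φ (x • A) = x • φ A := by
    intro x A
    apply hmapinj
    show (φ (x • A)).map ⇑f = (x • φ A).map ⇑f
    rw [map_smul5, hφ, map_smul5, hφ, Matrix.mul_smul, Matrix.smul_mul]
  have hinj : Function.Injective φ := by
    intro A B h
    apply hmapinj
    apply hcancel
    rw [← hφ, ← hφ, h]
  obtain ⟨h, hdet, hcomm⟩ := mini_skolem_noether φ hmul hadd hsmul hinj
  obtain ⟨hu, hhu⟩ := (Matrix.isUnit_iff_isUnit_det h).2 hdet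
  set hh : GL (Fin 2) k := Matrix.GeneralLinearGroup.map f hu with hhh
  set hm : Matrix (Fin 2) (Fin 2) k := (hh : Matrix (Fin 2) (Fin 2) k) with hhm
  set hi : Matrix (Fin 2) (Fin 2) k := ((hh⁻¹ : GL (Fin 2) k) : Matrix (Fin 2) (Fin 2) k)
    with hhi
  have hhval : hm = h.map ⇑f := by rw [hhm, hhh, val_mapGL, hhu]
  have hmhi : hm * hi = 1 := by
    rw [hhm, hhi, ← Units.val_mul, mul_inv_cancel, Units.val_one]
  have hihm : hi * hm = 1 := by
    rw [hhm, hhi, ← Units.val_mul, inv_mul_cancel, Units.val_one]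
  have key1 : ∀ A : M5, gm * (A.map ⇑f * gi) = hm * (A.map ⇑f * hi) := by
    intro A
    have hc := congrArg (fun M => M.map ⇑f) (hcomm A)
    simp only [Matrix.map_mul] at hc
    rw [hφ, ← hhval] at hc
    -- hc : gm * A.map f * gi * hm = hm * A.map f
    have h2 := congrArg (fun M => M * hi) hc
    simp only [mul_assoc] at h2
    rw [hmhi, mul_one] at h2
    exact h2
  have mcomm : ∀ A : M5, (hi * gm) * A.map ⇑f = A.map ⇑f * (hi * gm) := by
    intro A
    have h2 := congrArg (fun M => hi * (M * gm)) (key1 A)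
    simp only [mul_assoc] at h2
    rw [hig1, mul_one, ← mul_assoc hi hm, hihm, one_mul] at h2
    rw [mul_assoc]
    exact h2
  have hpair : Pairwise fun i j : Fin 2 =>
      Commute (Matrix.single i j 1) ((hh⁻¹ * g : GL (Fin 2) k) : Matrix (Fin 2) (Fin 2) k) := by
    intro i j hij
    have hval : ((hh⁻¹ * g : GL (Fin 2) k) : Matrix (Fin 2) (Fin 2) k) = hi * gm := by
      rw [Units.val_mul]
    unfold Commute SemiconjBy
    rw [hval, ← mapE f i j, ← mcomm (Matrix.single i j 1)]
  obtain ⟨c, hcsc⟩ := Matrix.mem_range_scalar_of_commute_single hpair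
  have h1 : toPGL2 k (hh⁻¹ * g) = 1 :=
    (toPGL2_eq_one_iff _).2 ⟨c, by rw [← hcsc, scalar_smul_one]⟩
  have h2 : g = hh * (hh⁻¹ * g) := (mul_inv_cancel_left _ _).symm
  have h3 : toPGL2 k g = toPGL2 k hh := by
    rw [h2, _root_.map_mul, h1, mul_one]
  exact MonoidHom.mem_range.2 ⟨hu, h3.symm⟩

lemma norm_PSL_le (hf : Function.Injective ⇑f) :
    Subgroup.normalizer ((PSLsub f) : Set _) ≤ PGLsub f := by
  intro x hx
  obtain ⟨g, rfl⟩ := QuotientGroup.mk'_surjective (Subgroup.center (GL (Fin 2) k)) x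
  apply mem_PGL_of_normalizes f hf g
  intro S
  have hm : toPGL2 k (Matrix.GeneralLinearGroup.map f (Matrix.SpecialLinearGroup.toGL S))
      ∈ PSLsub f := MonoidHom.mem_range.2 ⟨S, rfl⟩
  have h2 := (Subgroup.mem_normalizer_iff.mp hx _).mp hm
  rw [show (toPGL2 k) (g * Matrix.GeneralLinearGroup.map f (Matrix.SpecialLinearGroup.toGL S)
      * g⁻¹) = QuotientGroup.mk' (Subgroup.center (GL (Fin 2) k)) g
        * toPGL2 k (Matrix.GeneralLinearGroup.map f (Matrix.SpecialLinearGroup.toGL S))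
        * (QuotientGroup.mk' (Subgroup.center (GL (Fin 2) k)) g)⁻¹ from by
    rw [_root_.map_mul, _root_.map_mul, _root_.map_inv]; rfl]
  exact h2

lemma psl_le_pgl : PSLsub f ≤ PGLsub f := by
  rintro x ⟨S, rfl⟩
  exact MonoidHom.mem_range.2 ⟨Matrix.SpecialLinearGroup.toGL S, rfl⟩

lemma psl_perfect : ⁅PSLsub f, PSLsub f⁆ = PSLsub f := by
  have h : PSLsub f = Subgroup.map ((toPGL2 k).comp
      ((Matrix.GeneralLinearGroup.map f).comp Matrix.SpecialLinearGroup.toGL)) ⊤ :=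
    MonoidHom.range_eq_map _
  rw [h, ← Subgroup.map_commutator, sl5_perfect]

lemma comm_pgl : ⁅PGLsub f, PGLsub f⁆ = PSLsub f := by
  apply le_antisymm
  · rw [Subgroup.commutator_le]
    rintro x ⟨A, rfl⟩ y ⟨B, rfl⟩
    rw [← map_commutatorElement]
    have hdet : (⁅A, B⁆ : GL (Fin 2) (ZMod 5)).1.det = 1 := by
      have h1 : Matrix.GeneralLinearGroup.det ⁅A, B⁆
          = ⁅Matrix.GeneralLinearGroup.det A, Matrix.GeneralLinearGroup.det B⁆ :=
        map_commutatorElement _ A B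
      have h2 : ⁅Matrix.GeneralLinearGroup.det A, Matrix.GeneralLinearGroup.det B⁆
          = (1 : (ZMod 5)ˣ) := commutatorElement_eq_one_iff_commute.mpr (Commute.all _ _)
      have h3 : Matrix.GeneralLinearGroup.det ⁅A, B⁆ = 1 := h1.trans h2
      have h4 := congrArg Units.val h3
      rwa [Matrix.GeneralLinearGroup.val_det_apply] at h4
    refine MonoidHom.mem_range.2 ⟨(⟨(⁅A, B⁆ : GL (Fin 2) (ZMod 5)).1, hdet⟩ : SL5), ?_⟩
    have h5 : Matrix.SpecialLinearGroup.toGL (⟨(⁅A, B⁆ : GL (Fin 2) (ZMod 5)).1, hdet⟩ : SL5)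
        = ⁅A, B⁆ := Units.ext rfl
    erw [MonoidHom.comp_apply, MonoidHom.comp_apply, h5]
    rfl
  · rw [← psl_perfect f]
    exact Subgroup.commutator_mono (psl_le_pgl f) (psl_le_pgl f)

def Wu : GL (Fin 2) (ZMod 5) :=
  ⟨!![2, 0; 0, 1], !![3, 0; 0, 1], by decide, by decide⟩

lemma sq5 : ∀ d : ZMod 5, d ≠ 0 →
    (∃ lam : ZMod 5, lam ≠ 0 ∧ d = lam * lam) ∨
    (∃ lam : ZMod 5, lam ≠ 0 ∧ d * 2 = lam * lam) := by decide

lemma sq_mem_psl (B : GL (Fin 2) (ZMod 5)) (lam : ZMod 5) (hlam : lam ≠ 0)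
    (hd : (B : M5).det = lam * lam) :
    toPGL2 k (Matrix.GeneralLinearGroup.map f B) ∈ PSLsub f := by
  have hS : (lam⁻¹ • (B : M5)).det = 1 := by
    rw [Matrix.det_smul, hd, Fintype.card_fin]
    field_simp
  refine MonoidHom.mem_range.2 ⟨(⟨lam⁻¹ • (B : M5), hS⟩ : SL5), ?_⟩
  erw [MonoidHom.comp_apply, MonoidHom.comp_apply]
  refine (toPGL2_eq_iff _ _).2 ⟨f lam, ?_⟩
  erw [val_mapGL, val_mapGL, val_toGL]
  show (B : M5).map ⇑f = f lam • (((⟨lam⁻¹ • (B : M5), hS⟩ : SL5) : M5).map ⇑f)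
  rw [Matrix.SpecialLinearGroup.coe_mk, map_smul5]
  rw [smul_smul, ← _root_.map_mul, mul_inv_cancel₀ hlam, _root_.map_one, one_smul]

lemma mem_pgl_cases (x : PGL2 k) (hx : x ∈ PGLsub f) :
    x ∈ PSLsub f ∨ x * toPGL2 k (Matrix.GeneralLinearGroup.map f Wu) ∈ PSLsub f := by
  obtain ⟨A, rfl⟩ := MonoidHom.mem_range.1 hx
  have hdet : (A : M5).det ≠ 0 := by
    have := Matrix.isUnits_det_units A
    exact this.ne_zero
  rcases sq5 _ hdet with ⟨lam, hlam, hd⟩ | ⟨lam, hlam, hd⟩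
  · left
    exact sq_mem_psl f A lam hlam hd
  · right
    have hAW : ((A * Wu : GL (Fin 2) (ZMod 5)) : M5).det = lam * lam := by
      rw [Units.val_mul, Matrix.det_mul, show ((Wu : GL (Fin 2) (ZMod 5)) : M5).det = 2 from by
        simp [Wu, Matrix.det_fin_two_of], hd]
    have h2 := sq_mem_psl f (A * Wu) lam hlam hAW
    rw [show toPGL2 k (Matrix.GeneralLinearGroup.map f (A * Wu))
        = ((toPGL2 k).comp (Matrix.GeneralLinearGroup.map f)) A
          * toPGL2 k (Matrix.GeneralLinearGroup.map f Wu) from by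
      rw [_root_.map_mul, _root_.map_mul]; rfl] at h2
    exact h2

lemma dichotomy (K : Subgroup (PGL2 k)) (h1 : PSLsub f ≤ K) (h2 : K ≤ PGLsub f) :
    K = PSLsub f ∨ K = PGLsub f := by
  by_cases hK : K ≤ PSLsub f
  · exact Or.inl (le_antisymm hK h1)
  · right
    apply le_antisymm h2
    obtain ⟨n, hnK, hnP⟩ := SetLike.not_le_iff_exists.mp hK
    have hnw := (mem_pgl_cases f n (h2 hnK)).resolve_left hnP
    have hwK : toPGL2 k (Matrix.GeneralLinearGroup.map f Wu) ∈ K := by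
      have h3 := K.mul_mem (K.inv_mem hnK) (h1 hnw)
      rwa [inv_mul_cancel_left] at h3
    intro y hy
    rcases mem_pgl_cases f y hy with h | h
    · exact h1 h
    · have h4 := K.mul_mem (h1 h) (K.inv_mem hwK)
      rwa [mul_inv_cancel_right] at h4
end main


section glue
variable {Γ : Type*} [Group Γ]

lemma map_conj_eq_of_mem_normalizer {a : Γ} {H : Subgroup Γ} (ha : a ∈ Subgroup.normalizer (H : Set _)) :
    H.map (MulAut.conj a).toMonoidHom = H := by
  ext y
  rw [Subgroup.mem_map]
  constructor
  · rintro ⟨x, hx, rfl⟩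
    exact (Subgroup.mem_normalizer_iff.mp ha x).mp hx
  · intro hy
    refine ⟨a⁻¹ * y * a, ?_, ?_⟩
    · have := (Subgroup.mem_normalizer_iff.mp ha (a⁻¹ * y * a)).mpr
      apply this
      have : a * (a⁻¹ * y * a) * a⁻¹ = y := by group
      rwa [this]
    · show a * (a⁻¹ * y * a) * a⁻¹ = y
      group

lemma mem_normalizer_of_map_conj_eq {a : Γ} {H : Subgroup Γ}
    (h : H.map (MulAut.conj a).toMonoidHom = H) : a ∈ Subgroup.normalizer (H : Set _) := by
  rw [Subgroup.mem_normalizer_iff]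
  intro x
  constructor
  · intro hx
    rw [← h]
    exact Subgroup.mem_map.2 ⟨x, hx, rfl⟩
  · intro hx
    rw [← h] at hx
    obtain ⟨x', hx', he⟩ := Subgroup.mem_map.1 hx
    have : x' = x := by
      have he' : a * x' * a⁻¹ = a * x * a⁻¹ := he
      have he'' : a * (x' * a⁻¹) = a * (x * a⁻¹) := by
        simpa [mul_assoc] using he'
      exact mul_right_cancel (mul_left_cancel he'')
    rwa [← this]

lemma conj_map_le_normalizer {a : Γ} {H K : Subgroup Γ} (hK : K ≤ Subgroup.normalizer (H : Set _)) :
    K.map (MulAut.conj a).toMonoidHom ≤ Subgroup.normalizer ((H.map (MulAut.conj a).toMonoidHom) : Set _) := by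
  rw [← Subgroup.map_equiv_normalizer_eq H (MulAut.conj a)]
  exact Subgroup.map_le_map_iff_of_injective (MulAut.conj a).injective |>.2 hK

lemma G_le_normalizer (G : Subgroup Γ) (N : Subgroup ↥G) [hN : N.Normal] :
    G ≤ Subgroup.normalizer ((N.map G.subtype) : Set _) := by
  intro g hg
  rw [Subgroup.mem_normalizer_iff]
  intro h
  constructor
  · rintro ⟨n, hn, rfl⟩
    exact ⟨(⟨g, hg⟩ : ↥G) * n * (⟨g, hg⟩ : ↥G)⁻¹, hN.conj_mem n hn _, rfl⟩
  · rintro ⟨n, hn, he⟩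
    have h2 : h = ((⟨g, hg⟩ : ↥G)⁻¹ * n * ⟨g, hg⟩ : ↥G) := by
      have he' : g * h * g⁻¹ = (n : Γ) := he.symm
      push_cast
      rw [← he']
      group
    rw [h2]
    exact ⟨(⟨g, hg⟩ : ↥G)⁻¹ * n * ⟨g, hg⟩, by
      have := hN.conj_mem n hn (⟨g, hg⟩ : ↥G)⁻¹
      simpa using this, rfl⟩

lemma commutator_le_of_abelian_quotient (G : Subgroup Γ) (N : Subgroup ↥G) [N.Normal]
    (hab : ∀ x y : ↥G ⧸ N, x * y = y * x) :
    ⁅G, G⁆ ≤ N.map G.subtype := by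
  have h1 : (⁅(⊤ : Subgroup ↥G), (⊤ : Subgroup ↥G)⁆ : Subgroup ↥G) ≤ N := by
    rw [Subgroup.commutator_le]
    intro g _ h _
    rw [← QuotientGroup.eq_one_iff]
    have : ((⁅g, h⁆ : ↥G) : ↥G ⧸ N) = ⁅(↑g : ↥G ⧸ N), (↑h : ↥G ⧸ N)⁆ :=
      map_commutatorElement (QuotientGroup.mk' N) g h
    rw [this]
    exact commutatorElement_eq_one_iff_commute.mpr (hab _ _)
  calc ⁅G, G⁆ = ⁅Subgroup.map G.subtype ⊤, Subgroup.map G.subtype ⊤⁆ := by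
        rw [← MonoidHom.range_eq_map, Subgroup.range_subtype]
    _ = Subgroup.map G.subtype ⁅⊤, ⊤⁆ := (Subgroup.map_commutator _ _ _).symm
    _ ≤ N.map G.subtype := Subgroup.map_mono h1

end glue


/-- For `G ≤ PGL₂(k)` (`k` an algebraic closure of `𝔽₅`) with a normal subgroup `N` such
that `G/N` is abelian: `N` is conjugate to `PSL₂(𝔽₅)` or `PGL₂(𝔽₅)` iff `G` is. -/
theorem conj_psl_or_pgl_five_iff_of_normal
    (G : Subgroup (PGL2 (AlgebraicClosure (ZMod 5)))) (N : Subgroup ↥G) [N.Normal]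
    (hab : ∀ x y : ↥G ⧸ N, x * y = y * x) :
    (IsConjSubgroup (N.map G.subtype)
        (PSLsub (algebraMap (ZMod 5) (AlgebraicClosure (ZMod 5)))) ∨
      IsConjSubgroup (N.map G.subtype)
        (PGLsub (algebraMap (ZMod 5) (AlgebraicClosure (ZMod 5))))) ↔
    (IsConjSubgroup G (PSLsub (algebraMap (ZMod 5) (AlgebraicClosure (ZMod 5)))) ∨
      IsConjSubgroup G (PGLsub (algebraMap (ZMod 5) (AlgebraicClosure (ZMod 5))))) := by

  set f := algebraMap (ZMod 5) (AlgebraicClosure (ZMod 5)) with hfdef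
  have hf : Function.Injective ⇑f := f.injective
  set N' := N.map G.subtype with hN'def
  have hNG : N' ≤ G := Subgroup.map_subtype_le N
  have hGn : G ≤ Subgroup.normalizer (N' : Set _) := G_le_normalizer G N
  constructor
  · rintro (⟨a, ha⟩ | ⟨a, ha⟩)
    · have h1 : PSLsub f ≤ G.map (MulAut.conj a).toMonoidHom := by
        rw [← ha]; exact Subgroup.map_mono hNG
      have h2 : G.map (MulAut.conj a).toMonoidHom ≤ Subgroup.normalizer ((PSLsub f) : Set _) := by
        rw [← ha]; exact conj_map_le_normalizer hGn
      have h3 : G.map (MulAut.conj a).toMonoidHom ≤ PGLsub f :=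
        le_trans h2 (norm_PSL_le f hf)
      rcases dichotomy f _ h1 h3 with h | h
      · exact Or.inl ⟨a, h⟩
      · exact Or.inr ⟨a, h⟩
    · have h1 : PGLsub f ≤ G.map (MulAut.conj a).toMonoidHom := by
        rw [← ha]; exact Subgroup.map_mono hNG
      have h2 : G.map (MulAut.conj a).toMonoidHom ≤ Subgroup.normalizer ((PGLsub f) : Set _) := by
        rw [← ha]; exact conj_map_le_normalizer hGn
      have h3 : Subgroup.normalizer ((PGLsub f) : Set _) ≤ PGLsub f := by
        intro x hx
        have hmapP : (PGLsub f).map (MulAut.conj x).toMonoidHom = PGLsub f :=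
          map_conj_eq_of_mem_normalizer hx
        have hmapS : (PSLsub f).map (MulAut.conj x).toMonoidHom = PSLsub f := by
          rw [← comm_pgl f, Subgroup.map_commutator, hmapP]
        exact norm_PSL_le f hf (mem_normalizer_of_map_conj_eq hmapS)
      exact Or.inr ⟨a, le_antisymm (le_trans h2 h3) h1⟩
  · rintro (⟨a, ha⟩ | ⟨a, ha⟩)
    · have hc : ⁅G, G⁆ ≤ N' := commutator_le_of_abelian_quotient G N hab
      have h1 : PSLsub f ≤ N'.map (MulAut.conj a).toMonoidHom := by
        rw [← psl_perfect f, ← ha, ← Subgroup.map_commutator]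
        exact Subgroup.map_mono hc
      have h2 : N'.map (MulAut.conj a).toMonoidHom ≤ PSLsub f := by
        rw [← ha]; exact Subgroup.map_mono hNG
      exact Or.inl ⟨a, le_antisymm h2 h1⟩
    · have hc : ⁅G, G⁆ ≤ N' := commutator_le_of_abelian_quotient G N hab
      have h1 : PSLsub f ≤ N'.map (MulAut.conj a).toMonoidHom := by
        rw [← comm_pgl f, ← ha, ← Subgroup.map_commutator]
        exact Subgroup.map_mono hc
      have h2 : N'.map (MulAut.conj a).toMonoidHom ≤ PGLsub f := by
        rw [← ha]; exact Subgroup.map_mono hNG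
      rcases dichotomy f _ h1 h2 with h | h
      · exact Or.inl ⟨a, h⟩
      · exact Or.inr ⟨a, h⟩
end
end

section
/- Let k be an algebraic closure of F_3 and let G be a subgroup of GL_2(k) whose image in PGL_2(k) is conjugate to PSL_2(F_3) or to PGL_2(F_3). Then G is conjugate in GL_2(k) to a subgroup of k^× · GL_2(F_3), the subgroup of GL_2(k) generated by the scalar matrices and GL_2(F_3) (embedded via the inclusion F_3 ↪ k). -/
open Matrix

noncomputable section

/-- The subgroup of scalar matrices in `GL₂(k)`. -/
def scalarGL2 (k : Type*) [Field k] : Subgroup (GL (Fin 2) k) :=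
  (Units.map (algebraMap k (Matrix (Fin 2) (Fin 2) k)).toMonoidHom).range

lemma center_le_scalarGL2 (k : Type*) [Field k] :
    Subgroup.center (GL (Fin 2) k) ≤ scalarGL2 k := by
  intro A hA
  have hcomm : ∀ t : TransvectionStruct (Fin 2) k,
      Commute t.toMatrix (A : Matrix (Fin 2) (Fin 2) k) := by
    intro t
    have h := Subgroup.mem_center_iff.mp hA ⟨t.toMatrix, t.inv.toMatrix, t.mul_inv, t.inv_mul⟩
    have := congrArg Units.val h
    simpa [Units.val_mul, Commute, SemiconjBy] using this
  obtain ⟨r, hr⟩ := Matrix.mem_range_scalar_of_commute_transvectionStruct hcomm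
  have hr0 : r ≠ 0 := by
    rintro rfl
    have h1 : (A : Matrix (Fin 2) (Fin 2) k) * (A⁻¹ : GL (Fin 2) k) = 1 := by
      rw [← Units.val_mul, mul_inv_cancel, Units.val_one]
    rw [← hr] at h1
    simp only [Matrix.scalar_apply, Matrix.diagonal_zero, Matrix.zero_mul] at h1
    exact one_ne_zero (α := k) (by simpa using congrFun (congrFun h1.symm 0) 0)
  refine ⟨Units.mk0 r hr0, Units.ext ?_⟩
  simp only [Units.coe_map, Units.val_mk0, RingHom.toMonoidHom_eq_coe, MonoidHom.coe_coe]
  rw [← hr]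
  ext i j
  simp [Matrix.algebraMap_matrix_apply, Matrix.scalar_apply, Matrix.diagonal_apply]

/-- A subgroup of `GL₂(k)` (`k` an algebraic closure of `𝔽₃`) whose image in `PGL₂(k)` is
conjugate to `PSL₂(𝔽₃)` or to `PGL₂(𝔽₃)` is conjugate in `GL₂(k)` to a subgroup of
`k^× · GL₂(𝔽₃)`, the subgroup generated by the scalars and `GL₂(𝔽₃)`. -/
theorem conj_le_scalars_mul_gl_three
    (G : Subgroup (GL (Fin 2) (AlgebraicClosure (ZMod 3))))
    (h : IsConjSubgroup (Subgroup.map (toPGL2 (AlgebraicClosure (ZMod 3))) G)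
        (PSLsub (algebraMap (ZMod 3) (AlgebraicClosure (ZMod 3)))) ∨
      IsConjSubgroup (Subgroup.map (toPGL2 (AlgebraicClosure (ZMod 3))) G)
        (PGLsub (algebraMap (ZMod 3) (AlgebraicClosure (ZMod 3))))) :
    ∃ x : GL (Fin 2) (AlgebraicClosure (ZMod 3)),
      Subgroup.map (MulAut.conj x).toMonoidHom G ≤
        scalarGL2 (AlgebraicClosure (ZMod 3)) ⊔
          (Matrix.GeneralLinearGroup.map
            (algebraMap (ZMod 3) (AlgebraicClosure (ZMod 3)))).range := by
  set k := AlgebraicClosure (ZMod 3)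
  set f := algebraMap (ZMod 3) k with hf
  have hPSL : PSLsub f ≤ PGLsub f := by
    rintro _ ⟨a, rfl⟩
    exact ⟨Matrix.SpecialLinearGroup.toGL a, rfl⟩
  obtain ⟨g, hg⟩ : ∃ g : PGL2 k,
      Subgroup.map (MulAut.conj g).toMonoidHom (Subgroup.map (toPGL2 k) G) ≤ PGLsub f := by
    rcases h with ⟨g, hg⟩ | ⟨g, hg⟩
    · exact ⟨g, hg ▸ hPSL⟩
    · exact ⟨g, hg.le⟩
  obtain ⟨x, rfl⟩ : ∃ x : GL (Fin 2) k, toPGL2 k x = g :=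
    QuotientGroup.mk'_surjective _ g
  refine ⟨x, ?_⟩
  have key : Subgroup.map (MulAut.conj x).toMonoidHom G ≤
      Subgroup.comap (toPGL2 k) (PGLsub f) := by
    rintro _ ⟨b, hb, rfl⟩
    refine hg ⟨toPGL2 k b, ⟨b, hb, rfl⟩, ?_⟩
    simp [MulAut.conj_apply]
  refine key.trans ?_
  have hrange : PGLsub f = Subgroup.map (toPGL2 k) (Matrix.GeneralLinearGroup.map f).range := by
    rw [PGLsub, MonoidHom.range_comp]
  rw [hrange, Subgroup.comap_map_eq]
  have hker : (toPGL2 k).ker = Subgroup.center (GL (Fin 2) k) :=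
    QuotientGroup.ker_mk' _
  rw [hker]
  exact sup_le le_sup_right ((center_le_scalarGL2 k).trans le_sup_left)
end
end
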